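/- arXiv:1909.04081 — 3 statements merged into one kernel-verified Lean document; each statement's English description precedes it below -/
import Mathlib

section
/- For n ≥ 3, the bubble-sort star graph BS_n is (2n−5)-edge-fault-tolerant strongly Menger edge connected: for any edge set F_e with |F_e| ≤ 2n − 5 and any two distinct vertices u, v, the graph BS_n − F_e contains min{d_{BS_n−F_e}(u), d_{BS_n−F_e}(v)} pairwise edge-disjoint paths joining u and v. -/
open SimpleGraph

/-- Adjacency relation of the bubble-sort star graph: `y` is obtained from `x` by
swapping the symbols at positions `i` and `j` (0-indexed), where either `j = i+1`
(an adjacent transposition, i.e. positions `k-1, k` for `k ∈ [2,n]`) or `i = 0`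
(a star transposition, i.e. positions `1, k` for `k ∈ [2,n]`). -/
def BSRel (n : ℕ) (x y : Equiv.Perm (Fin n)) : Prop :=
  ∃ i j : Fin n, (j.val = i.val + 1 ∨ i.val = 0) ∧ i ≠ j ∧ y = x * Equiv.swap i j

/-- The n-dimensional bubble-sort star graph `BS_n` on the permutations of `{1,…,n}`. -/
def BS (n : ℕ) : SimpleGraph (Equiv.Perm (Fin n)) :=
  SimpleGraph.fromRel (BSRel n)

/-- The degree of a vertex, as the cardinality of its neighbour set. -/
noncomputable def deg {V : Type*} (G : SimpleGraph V) (v : V) : ℕ :=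
  (G.neighborSet v).ncard

/-- `G` contains `m` pairwise edge-disjoint paths joining `u` and `v`. -/
def HasEdgeDisjointPaths {V : Type*} (G : SimpleGraph V) (u v : V) (m : ℕ) : Prop :=
  ∃ P : Fin m → G.Path u v, ∀ i j : Fin m, i ≠ j →
    List.Disjoint ((P i : G.Walk u v).edges) ((P j : G.Walk u v).edges)

namespace BSAux

/-! ### Consecutive pairs of a list -/

def zc {α : Type*} : List α → List (α × α)
  | a :: b :: l => (a, b) :: zc (b :: l)
  | _ => []

@[simp] lemma zc_nil {α : Type*} : zc ([] : List α) = [] := rfl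
@[simp] lemma zc_single {α : Type*} (a : α) : zc [a] = [] := rfl
@[simp] lemma zc_cons₂ {α : Type*} (a b : α) (l : List α) :
    zc (a :: b :: l) = (a, b) :: zc (b :: l) := rfl

lemma zc_mem {α : Type*} : ∀ {l : List α} {p : α × α}, p ∈ zc l → p.1 ∈ l ∧ p.2 ∈ l := by
  intro l
  induction l with
  | nil => intro p h; simp at h
  | cons a t ih =>
    intro p h
    cases t with
    | nil => simp at h
    | cons b l2 =>
      rw [zc_cons₂] at h
      rcases List.mem_cons.1 h with h | h
      · subst h; exact ⟨List.mem_cons_self, List.mem_cons_of_mem _ (List.mem_cons_self)⟩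
      · obtain ⟨h1, h2⟩ := ih h
        exact ⟨List.mem_cons_of_mem _ h1, List.mem_cons_of_mem _ h2⟩

lemma zc_chain {α : Type*} {R : α → α → Prop} :
    ∀ {a : α} {l : List α}, List.Chain R a l → ∀ p ∈ zc (a :: l), R p.1 p.2 := by
  intro a l
  induction l generalizing a with
  | nil => intro _ p hp; simp at hp
  | cons b l2 ih =>
    intro hc p hp
    unfold List.Chain at hc
    rw [List.chain_cons] at hc
    rw [zc_cons₂] at hp
    rcases List.mem_cons.1 hp with h | h
    · subst h; exact hc.1
    · exact ih hc.2 p h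

lemma zc_nodup_rev {α : Type*} : ∀ {l : List α}, l.Nodup → ∀ {a b : α},
    (a, b) ∈ zc l → (b, a) ∉ zc l := by
  intro l
  induction l with
  | nil => intro _ a b h; simp at h
  | cons x t ih =>
    intro hnd a b hab hba
    cases t with
    | nil => simp at hab
    | cons y l2 =>
      rw [zc_cons₂] at hab hba
      have hx : x ∉ y :: l2 := (List.nodup_cons.1 hnd).1
      rcases List.mem_cons.1 hab with h | h
      · have hxa : a = x := (Prod.mk.injEq _ _ _ _ ▸ h).1
        have hyb : b = y := (Prod.mk.injEq _ _ _ _ ▸ h).2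
        rcases List.mem_cons.1 hba with h' | h'
        · have : b = x := (Prod.mk.injEq _ _ _ _ ▸ h').1
          subst hyb; exact hx (this ▸ List.mem_cons_self)
        · have := (zc_mem h').2
          subst hxa; exact hx this
      · rcases List.mem_cons.1 hba with h' | h'
        · have hbx : b = x := (Prod.mk.injEq _ _ _ _ ▸ h').1
          have := (zc_mem h).2
          subst hbx; exact hx this
        · exact ih (List.nodup_cons.1 hnd).2 h h'

/-! ### The augmentation increment -/

open scoped Classical in
noncomputable def unit {α : Type*} (a b : α) : α → α → ℤ := fun x y =>
  (if x = a ∧ y = b then 1 else 0) - (if x = b ∧ y = a then 1 else 0)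

noncomputable def chi {α : Type*} : List α → α → α → ℤ
  | a :: b :: l => fun x y => unit a b x y + chi (b :: l) x y
  | _ => fun _ _ => 0

@[simp] lemma chi_nil {α : Type*} (x y : α) : chi ([] : List α) x y = 0 := rfl
@[simp] lemma chi_single {α : Type*} (a x y : α) : chi [a] x y = 0 := rfl
@[simp] lemma chi_cons₂ {α : Type*} (a b : α) (l : List α) (x y : α) :
    chi (a :: b :: l) x y = unit a b x y + chi (b :: l) x y := rfl

lemma unit_skew {α : Type*} (a b x y : α) : unit a b y x = - unit a b x y := by
  classical
  unfold unit
  rcases em (x = a ∧ y = b) with h | h <;> rcases em (x = b ∧ y = a) with h' | h' <;>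
    simp [h, h', and_comm] <;> ring_nf <;> simp [and_comm] at * <;> tauto

lemma chi_skew {α : Type*} : ∀ (l : List α) (x y : α), chi l y x = - chi l x y := by
  intro l
  induction l with
  | nil => simp
  | cons a t ih =>
    intro x y
    cases t with
    | nil => simp
    | cons b l2 =>
      rw [chi_cons₂, chi_cons₂, ih, unit_skew]; ring

lemma chi_eq_zero {α : Type*} : ∀ {l : List α} {x y : α},
    (x, y) ∉ zc l → (y, x) ∉ zc l → chi l x y = 0 := by
  classical
  intro l
  induction l with
  | nil => simp
  | cons a t ih =>
    intro x y hxy hyx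
    cases t with
    | nil => simp
    | cons b l2 =>
      rw [zc_cons₂] at hxy hyx
      rw [chi_cons₂]
      have h1 : (x, y) ≠ (a, b) := fun h => hxy (h ▸ List.mem_cons_self)
      have h2 : (y, x) ≠ (a, b) := fun h => hyx (h ▸ List.mem_cons_self)
      have hA : ¬(x = a ∧ y = b) := fun hc => h1 (by simp [hc.1, hc.2])
      have hB : ¬(x = b ∧ y = a) := fun hc => h2 (by simp [hc.1, hc.2])
      have hu : unit a b x y = 0 := by
        unfold unit
        rw [if_neg hA, if_neg hB]
        ring
      rw [hu, ih (fun h => hxy (List.mem_cons_of_mem _ h))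
        (fun h => hyx (List.mem_cons_of_mem _ h))]
      ring

lemma chi_eq_one {α : Type*} : ∀ {l : List α}, l.Nodup → ∀ {x y : α},
    (x, y) ∈ zc l → chi l x y = 1 := by
  classical
  intro l
  induction l with
  | nil => intro _ x y h; simp at h
  | cons a t ih =>
    intro hnd x y hxy
    cases t with
    | nil => simp at hxy
    | cons b l2 =>
      have ha : a ∉ b :: l2 := (List.nodup_cons.1 hnd).1
      rw [zc_cons₂] at hxy
      rw [chi_cons₂]
      rcases List.mem_cons.1 hxy with h | h
      · have hx : x = a := (Prod.mk.injEq _ _ _ _ ▸ h).1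
        have hy : y = b := (Prod.mk.injEq _ _ _ _ ▸ h).2
        have hab : a ≠ b := fun h => ha (h ▸ List.mem_cons_self)
        have hu : unit a b x y = 1 := by
          have hn : ¬(x = b ∧ y = a) := by
            rintro ⟨h1, h2⟩; exact hab (hx.symm.trans h1)
          unfold unit
          rw [if_pos ⟨hx, hy⟩, if_neg hn]
          norm_num
        have hz : chi (b :: l2) x y = 0 := by
          apply chi_eq_zero
          · intro hmem; exact ha (hx ▸ (zc_mem hmem).1)
          · intro hmem; exact ha (hx ▸ (zc_mem hmem).2)
        rw [hu, hz]
        norm_num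
      · have hx : x ≠ a := fun hh => ha (hh ▸ (zc_mem h).1)
        have hy : y ≠ a := fun hh => ha (hh ▸ (zc_mem h).2)
        have hu : unit a b x y = 0 := by
          unfold unit
          rw [if_neg (fun (hc : x = a ∧ y = b) => hx hc.1),
            if_neg (fun (hc : x = b ∧ y = a) => hy hc.2)]
          ring
        rw [hu, ih (List.nodup_cons.1 hnd).2 h]; ring

lemma unit_rowsum {α : Type*} [Fintype α] [DecidableEq α] (a b : α) (hab : a ≠ b) (w : α) :
    ∑ y, unit a b w y = (if w = a then 1 else 0) - (if w = b then 1 else 0) := by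
  classical
  unfold unit
  rw [Finset.sum_sub_distrib]
  congr 1
  · rcases em (w = a) with h | h <;> simp [h]
  · rcases em (w = b) with h | h <;> simp [h]

lemma chi_rowsum {α : Type*} [Fintype α] [DecidableEq α] :
    ∀ (l : List α) (a : α), (a :: l).Nodup → ∀ (z : α),
      (a :: l).getLast (List.cons_ne_nil _ _) = z →
      ∀ w, ∑ y, chi (a :: l) w y = (if w = a then 1 else 0) - (if w = z then 1 else 0) := by
  classical
  intro l
  induction l with
  | nil =>
    intro a _ z hz w
    simp only [List.getLast_singleton] at hz
    subst hz; simp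
  | cons b l2 ih =>
    intro a hnd z hz w
    have hab : a ≠ b := by
      have := (List.nodup_cons.1 hnd).1
      intro h; exact this (h ▸ List.mem_cons_self)
    have hz' : (b :: l2).getLast (List.cons_ne_nil _ _) = z := by
      rwa [List.getLast_cons (List.cons_ne_nil _ _)] at hz
    have hsum : ∀ y, chi (a :: b :: l2) w y = unit a b w y + chi (b :: l2) w y := fun y => rfl
    simp only [hsum]
    rw [Finset.sum_add_distrib, unit_rowsum a b hab, ih b (List.nodup_cons.1 hnd).2 z hz']
    ring

/-! ### Flows -/

variable {V : Type*} [Fintype V] [DecidableEq V]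

open scoped Classical in
noncomputable def cutP (G : SimpleGraph V) (A : Finset V) : ℕ :=
  (Finset.univ.filter fun p : V × V => p.1 ∈ A ∧ p.2 ∉ A ∧ G.Adj p.1 p.2).card

open scoped Classical in
noncomputable def cap (G : SimpleGraph V) : V → V → ℤ := fun a b => if G.Adj a b then 1 else 0

lemma cap_nonneg (G : SimpleGraph V) (a b : V) : 0 ≤ cap G a b := by
  unfold cap; split <;> norm_num

lemma cap_le_one (G : SimpleGraph V) (a b : V) : cap G a b ≤ 1 := by
  unfold cap; split <;> norm_num

lemma adj_of_one_le_cap {G : SimpleGraph V} {a b : V} (h : 1 ≤ cap G a b) : G.Adj a b := by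
  by_contra hn
  unfold cap at h
  rw [if_neg hn] at h
  norm_num at h

def IsFlow (G : SimpleGraph V) (u v : V) (k : ℤ) (φ : V → V → ℤ) : Prop :=
  (∀ a b, φ b a = - φ a b) ∧ (∀ a b, φ a b ≤ cap G a b) ∧
  (∀ w, w ≠ u → w ≠ v → ∑ b, φ w b = 0) ∧ (∑ b, φ u b = k)

lemma flow_cross_eq {G : SimpleGraph V} {u v : V} {k : ℤ} {φ : V → V → ℤ}
    (hf : IsFlow G u v k φ) (A : Finset V) (hu : u ∈ A) (hv : v ∉ A) :
    ∑ a ∈ A, ∑ b ∈ Aᶜ, φ a b = k := by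
  obtain ⟨hskew, hcap, hcons, hval⟩ := hf
  have h1 : ∑ a ∈ A, (∑ b, φ a b) = k := by
    rw [Finset.sum_eq_single_of_mem u hu]
    · exact hval
    · intro w hw hwu
      exact hcons w hwu (fun h => hv (h ▸ hw))
  have h2 : ∀ a, ∑ b ∈ A, φ a b + ∑ b ∈ Aᶜ, φ a b = ∑ b, φ a b :=
    fun a => Finset.sum_add_sum_compl A (φ a)
  have h3 : ∑ a ∈ A, ∑ b ∈ A, φ a b = 0 := by
    have hcomm : ∑ a ∈ A, ∑ b ∈ A, φ a b = ∑ b ∈ A, ∑ a ∈ A, φ a b := Finset.sum_comm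
    have hneg : ∑ b ∈ A, ∑ a ∈ A, φ a b = - ∑ a ∈ A, ∑ b ∈ A, φ a b := by
      rw [← Finset.sum_neg_distrib]
      apply Finset.sum_congr rfl
      intro b _
      rw [← Finset.sum_neg_distrib]
      apply Finset.sum_congr rfl
      intro a _
      rw [hskew]  -- φ a b = - φ b a? careful
    omega
  have h4 : ∑ a ∈ A, (∑ b ∈ A, φ a b + ∑ b ∈ Aᶜ, φ a b) = k := by
    rw [Finset.sum_congr rfl (fun a _ => h2 a)]; exact h1
  rw [Finset.sum_add_distrib, h3] at h4
  linarith

lemma cutP_cast (G : SimpleGraph V) (A : Finset V) :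
    (cutP G A : ℤ) = ∑ a ∈ A, ∑ b ∈ Aᶜ, cap G a b := by
  classical
  unfold cutP cap
  rw [Finset.card_filter]
  rw [Fintype.sum_prod_type]
  push_cast
  rw [← Finset.sum_add_sum_compl A]
  have hz : ∑ a ∈ Aᶜ, ∑ y, ((if a ∈ A ∧ y ∉ A ∧ G.Adj a y then (1:ℤ) else 0)) = 0 := by
    apply Finset.sum_eq_zero; intro a ha
    apply Finset.sum_eq_zero; intro y _
    rw [if_neg]; rintro ⟨h1, -⟩; exact (Finset.mem_compl.1 ha) h1
  rw [hz, add_zero]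
  apply Finset.sum_congr rfl
  intro a ha
  rw [← Finset.sum_add_sum_compl A (fun y => if a ∈ A ∧ y ∉ A ∧ G.Adj a y then (1:ℤ) else 0)]
  have hz2 : ∑ y ∈ A, (if a ∈ A ∧ y ∉ A ∧ G.Adj a y then (1:ℤ) else 0) = 0 := by
    apply Finset.sum_eq_zero; intro y hy
    rw [if_neg]; rintro ⟨-, h2, -⟩; exact h2 hy
  rw [hz2, zero_add]
  apply Finset.sum_congr rfl
  intro y hy
  have hyA : y ∉ A := Finset.mem_compl.1 hy
  by_cases hadj : G.Adj a y
  · rw [if_pos ⟨ha, hyA, hadj⟩, if_pos hadj]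
  · rw [if_neg (fun h => hadj h.2.2), if_neg hadj]

lemma flow_le_cut {G : SimpleGraph V} {u v : V} {k : ℤ} {φ : V → V → ℤ}
    (hf : IsFlow G u v k φ) (A : Finset V) (hu : u ∈ A) (hv : v ∉ A) :
    k ≤ (cutP G A : ℤ) := by
  rw [cutP_cast, ← flow_cross_eq hf A hu hv]
  apply Finset.sum_le_sum
  intro a _
  apply Finset.sum_le_sum
  intro b _
  exact hf.2.1 a b


/-! ### Deduplicated chains -/

lemma zc_chain_pair {α : Type*} {R : α → α → Prop} {a : α} {l : List α}
    (hc : List.Chain R a l) {x y : α} (h : (x, y) ∈ zc (a :: l)) : R x y :=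
  zc_chain hc (x, y) h

lemma getLast_eq_of_eq {α : Type*} {l1 l2 : List α} (h : l1 = l2) (h1 : l1 ≠ []) :
    l1.getLast h1 = l2.getLast (h ▸ h1) := by subst h; rfl

lemma exists_nodup_chain {α : Type*} {R : α → α → Prop} {u v : α}
    (h : Relation.ReflTransGen R u v) :
    ∃ l, List.Chain R u l ∧ (u :: l).getLast (List.cons_ne_nil _ _) = v ∧ (u :: l).Nodup := by
  induction h using Relation.ReflTransGen.head_induction_on with
  | refl => exact ⟨[], List.Chain.nil, rfl, List.nodup_singleton _⟩
  | @head a c hR hRT ih =>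
    obtain ⟨l, hcchain, hlast, hnd⟩ := ih
    by_cases hmem : a ∈ c :: l
    · obtain ⟨pre, suf, hsplit⟩ := List.append_of_mem hmem
      have hch' : List.Chain' R (c :: l) := hcchain
      rw [hsplit] at hch' hnd
      refine ⟨suf, ?_, ?_, ?_⟩
      · exact (List.IsChain.right_of_append hch' : List.Chain' R (a :: suf))
      · calc (a :: suf).getLast (List.cons_ne_nil _ _)
              = (pre ++ a :: suf).getLast (by simp) :=
                (List.getLast_append_of_ne_nil (l := pre) _ (List.cons_ne_nil _ _)).symm
          _ = (c :: l).getLast (List.cons_ne_nil _ _) :=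
                (getLast_eq_of_eq hsplit (List.cons_ne_nil _ _)).symm
          _ = v := hlast
      · exact hnd.sublist (by simp)
    · refine ⟨c :: l, List.Chain.cons hR hcchain, ?_, List.nodup_cons.2 ⟨hmem, hnd⟩⟩
      rw [List.getLast_cons (List.cons_ne_nil _ _)]
      exact hlast

/-! ### Walks from chains -/

variable {V : Type*} [Fintype V] [DecidableEq V]

lemma walk_of_chain {G : SimpleGraph V} :
    ∀ (l : List V) (a z : V), List.Chain G.Adj a l →
      (a :: l).getLast (List.cons_ne_nil _ _) = z →
      ∃ w : G.Walk a z, w.support = a :: l := by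
  intro l
  induction l with
  | nil =>
    intro a z _ hz
    simp only [List.getLast_singleton] at hz
    subst hz
    exact ⟨SimpleGraph.Walk.nil, rfl⟩
  | cons b l' ih =>
    intro a z hc hz
    unfold List.Chain at hc
    rw [List.chain_cons] at hc
    have hz' : (b :: l').getLast (List.cons_ne_nil _ _) = z := by
      rwa [List.getLast_cons (List.cons_ne_nil _ _)] at hz
    obtain ⟨w', hw'⟩ := ih b z hc.2 hz'
    exact ⟨SimpleGraph.Walk.cons hc.1 w', by rw [SimpleGraph.Walk.support_cons, hw']⟩

lemma walk_edges_zc {G : SimpleGraph V} :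
    ∀ {a z : V} (w : G.Walk a z) (e : Sym2 V), e ∈ w.edges →
      ∃ x y : V, (x, y) ∈ zc w.support ∧ e = s(x, y) := by
  intro a z w
  induction w with
  | nil => intro e he; simp at he
  | @cons x y zz hadj w' ih =>
    intro e he
    rw [SimpleGraph.Walk.edges_cons] at he
    rw [SimpleGraph.Walk.support_cons, w'.support_eq_cons, zc_cons₂]
    rcases List.mem_cons.1 he with h1 | h1
    · exact ⟨x, y, List.mem_cons_self, by simpa using h1⟩
    · obtain ⟨x', y', hp, hpe⟩ := ih e h1
      rw [w'.support_eq_cons] at hp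
      exact ⟨x', y', List.mem_cons_of_mem _ hp, hpe⟩

/-! ### Augmenting, max-flow, decomposition -/

lemma flow_augment {G : SimpleGraph V} {u v : V} {k : ℤ} {φ : V → V → ℤ}
    (hf : IsFlow G u v k φ) (huv : u ≠ v) {l : List V}
    (hc : List.Chain (fun a b => φ a b < cap G a b) u l)
    (hlast : (u :: l).getLast (List.cons_ne_nil _ _) = v) (hnd : (u :: l).Nodup) :
    IsFlow G u v (k + 1) (fun a b => φ a b + chi (u :: l) a b) := by
  obtain ⟨hskew, hcap, hcons, hval⟩ := hf
  refine ⟨?_, ?_, ?_, ?_⟩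
  · intro a b
    show φ b a + chi (u :: l) b a = -(φ a b + chi (u :: l) a b)
    rw [chi_skew, hskew]
    ring
  · intro a b
    show φ a b + chi (u :: l) a b ≤ cap G a b
    by_cases h1 : (a, b) ∈ zc (u :: l)
    · have hlt : φ a b < cap G a b := zc_chain_pair hc h1
      rw [chi_eq_one hnd h1]
      omega
    · by_cases h2 : (b, a) ∈ zc (u :: l)
      · have hch : chi (u :: l) a b = -1 := by
          rw [chi_skew, chi_eq_one hnd h2]
        rw [hch]
        have := hcap a b
        omega
      · rw [chi_eq_zero h1 h2]
        have := hcap a b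
        omega
  · intro w hwu hwv
    show ∑ b, (φ w b + chi (u :: l) w b) = 0
    rw [Finset.sum_add_distrib, hcons w hwu hwv,
      chi_rowsum l u hnd v hlast w, if_neg hwu, if_neg hwv]
    ring
  · show ∑ b, (φ u b + chi (u :: l) u b) = k + 1
    rw [Finset.sum_add_distrib, hval, chi_rowsum l u hnd v hlast u, if_pos rfl, if_neg huv]
    ring

lemma exists_flow {G : SimpleGraph V} {u v : V} (huv : u ≠ v) :
    ∀ (k : ℕ), (∀ A : Finset V, u ∈ A → v ∉ A → k ≤ cutP G A) →
      ∃ φ, IsFlow G u v k φ := by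
  intro k
  induction k with
  | zero =>
    intro _
    refine ⟨fun _ _ => 0, fun a b => by ring, fun a b => cap_nonneg G a b, fun w _ _ => by simp,
      by simp⟩
  | succ k ih =>
    intro hcut
    obtain ⟨φ, hφ⟩ := ih (fun A hA hv => le_trans (by omega) (hcut A hA hv))
    classical
    set R : V → V → Prop := fun a b => φ a b < cap G a b with hR
    set A : Finset V := Finset.univ.filter (fun w => Relation.ReflTransGen R u w) with hA
    have huA : u ∈ A := by
      rw [hA, Finset.mem_filter]
      exact ⟨Finset.mem_univ _, Relation.ReflTransGen.refl⟩
    by_cases hv : v ∈ A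
    · have hrt : Relation.ReflTransGen R u v := (Finset.mem_filter.1 hv).2
      obtain ⟨l, hc, hlast, hnd⟩ := exists_nodup_chain hrt
      refine ⟨fun a b => φ a b + chi (u :: l) a b, ?_⟩
      have hcast : ((k + 1 : ℕ) : ℤ) = (k : ℤ) + 1 := by push_cast; ring
      rw [hcast]
      exact flow_augment hφ huv hc hlast hnd
    · exfalso
      have hcross : ∀ a ∈ A, ∀ b ∈ Aᶜ, cap G a b ≤ φ a b := by
        intro a ha b hb
        by_contra hlt
        push_neg at hlt
        have : b ∈ A := by
          rw [hA, Finset.mem_filter]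
          exact ⟨Finset.mem_univ _,
            Relation.ReflTransGen.tail (Finset.mem_filter.1 ha).2 hlt⟩
        exact (Finset.mem_compl.1 hb) this
      have h1 : (cutP G A : ℤ) ≤ k := by
        rw [cutP_cast, ← flow_cross_eq hφ A huA hv]
        apply Finset.sum_le_sum
        intro a ha
        apply Finset.sum_le_sum
        intro b hb
        exact hcross a ha b hb
      have h2 := hcut A huA hv
      have h3 : ((k + 1 : ℕ) : ℤ) ≤ (cutP G A : ℤ) := by exact_mod_cast h2
      push_cast at h3
      omega

lemma flow_decomp {G : SimpleGraph V} {u v : V} (huv : u ≠ v) :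
    ∀ (k : ℕ) (φ : V → V → ℤ), IsFlow G u v k φ →
      ∃ P : Fin k → G.Path u v,
        (∀ i j, i ≠ j → List.Disjoint (P i : G.Walk u v).edges (P j : G.Walk u v).edges) ∧
        (∀ i, ∀ e ∈ (P i : G.Walk u v).edges, ∃ a b, e = s(a, b) ∧ 1 ≤ φ a b) := by
  intro k
  induction k with
  | zero =>
    intro φ _
    exact ⟨fun i => i.elim0, fun i => i.elim0, fun i => i.elim0⟩
  | succ k ih =>
    intro φ hφ
    classical
    obtain ⟨hskew, hcap, hcons, hval⟩ := hφ
    set R : V → V → Prop := fun a b => 1 ≤ φ a b with hR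
    set A : Finset V := Finset.univ.filter (fun w => Relation.ReflTransGen R u w) with hA
    have huA : u ∈ A := by
      rw [hA, Finset.mem_filter]
      exact ⟨Finset.mem_univ _, Relation.ReflTransGen.refl⟩
    have hv : v ∈ A := by
      by_contra hv
      have hcr := flow_cross_eq ⟨hskew, hcap, hcons, hval⟩ A huA hv
      have hle : ∑ a ∈ A, ∑ b ∈ Aᶜ, φ a b ≤ 0 := by
        apply Finset.sum_nonpos
        intro a ha
        apply Finset.sum_nonpos
        intro b hb
        by_contra hpos
        push_neg at hpos
        have hb' : b ∈ A := by
          rw [hA, Finset.mem_filter]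
          refine ⟨Finset.mem_univ _,
            Relation.ReflTransGen.tail (Finset.mem_filter.1 ha).2 ?_⟩
          rw [hR]
          omega
        exact (Finset.mem_compl.1 hb) hb'
      rw [hcr] at hle
      push_cast at hle
      omega
    have hrt : Relation.ReflTransGen R u v := (Finset.mem_filter.1 hv).2
    obtain ⟨l, hc, hlast, hnd⟩ := exists_nodup_chain hrt
    have hpair : ∀ x y : V, (x, y) ∈ zc (u :: l) → φ x y = 1 := by
      intro x y hp
      have h1 : (1:ℤ) ≤ φ x y := zc_chain_pair hc hp
      have h2 : φ x y ≤ 1 := le_trans (hcap _ _) (cap_le_one G _ _)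
      omega
    have hadjchain : List.Chain G.Adj u l := by
      apply List.Chain.imp _ hc
      intro a b hab
      exact adj_of_one_le_cap (le_trans hab (hcap a b))
    obtain ⟨w, hwsupp⟩ := walk_of_chain l u v hadjchain hlast
    have hwpath : w.IsPath := by
      rw [SimpleGraph.Walk.isPath_def, hwsupp]
      exact hnd
    have hflow' : IsFlow G u v k (fun a b => φ a b - chi (u :: l) a b) := by
      refine ⟨?_, ?_, ?_, ?_⟩
      · intro a b
        show φ b a - chi (u :: l) b a = -(φ a b - chi (u :: l) a b)
        rw [chi_skew, hskew]
        ring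
      · intro a b
        show φ a b - chi (u :: l) a b ≤ cap G a b
        by_cases h1 : (a, b) ∈ zc (u :: l)
        · rw [chi_eq_one hnd h1]
          have := hcap a b
          have := cap_nonneg G a b
          omega
        · by_cases h2 : (b, a) ∈ zc (u :: l)
          · have hc1 : chi (u :: l) a b = -1 := by rw [chi_skew, chi_eq_one hnd h2]
            have hba : φ b a = 1 := hpair b a h2
            have hsk := hskew a b
            have := cap_nonneg G a b
            omega
          · rw [chi_eq_zero h1 h2]
            have := hcap a b
            omega
      · intro w' hwu hwv
        show ∑ b, (φ w' b - chi (u :: l) w' b) = 0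
        rw [Finset.sum_sub_distrib, hcons w' hwu hwv,
          chi_rowsum l u hnd v hlast w', if_neg hwu, if_neg hwv]
        ring
      · show ∑ b, (φ u b - chi (u :: l) u b) = k
        rw [Finset.sum_sub_distrib, hval, chi_rowsum l u hnd v hlast u, if_pos rfl, if_neg huv]
        push_cast
        ring
    obtain ⟨P', hdisj', hinv'⟩ := ih (fun a b => φ a b - chi (u :: l) a b) hflow'
    have hzero : ∀ x y : V, (x, y) ∈ zc (u :: l) →
        φ x y - chi (u :: l) x y = 0 ∧ φ y x - chi (u :: l) y x = 0 := by
      intro x y hp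
      have h1 : φ x y - chi (u :: l) x y = 0 := by
        rw [chi_eq_one hnd hp, hpair x y hp]
        ring
      have h2 : φ y x - chi (u :: l) y x = 0 := by
        rw [chi_skew, hskew, chi_eq_one hnd hp, hpair x y hp]
        ring
      exact ⟨h1, h2⟩
    have hp0edges : ∀ e ∈ w.edges, ∃ x y : V, (x, y) ∈ zc (u :: l) ∧ e = s(x, y) := by
      intro e he
      have := walk_edges_zc w e he
      rwa [hwsupp] at this
    refine ⟨fun i => Fin.cases ⟨w, hwpath⟩ P' i, ?_, ?_⟩
    · intro i j hij
      induction i using Fin.cases with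
      | zero =>
        induction j using Fin.cases with
        | zero => exact absurd rfl hij
        | succ j' =>
          simp only [Fin.cases_zero, Fin.cases_succ]
          intro e he hec
          obtain ⟨x, y, hp, hpe⟩ := hp0edges e he
          obtain ⟨a, b, hab, hab1⟩ := hinv' j' e hec
          have h0 := hzero x y hp
          rw [hpe] at hab
          rcases (Sym2.eq_iff).1 hab with ⟨h1, h2⟩ | ⟨h1, h2⟩
          · rw [← h1, ← h2] at hab1; omega
          · rw [← h1, ← h2] at hab1; omega
      | succ i' =>
        induction j using Fin.cases with
        | zero =>
          simp only [Fin.cases_zero, Fin.cases_succ]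
          rw [List.disjoint_comm]
          intro e he hec
          obtain ⟨x, y, hp, hpe⟩ := hp0edges e he
          obtain ⟨a, b, hab, hab1⟩ := hinv' i' e hec
          have h0 := hzero x y hp
          rw [hpe] at hab
          rcases (Sym2.eq_iff).1 hab with ⟨h1, h2⟩ | ⟨h1, h2⟩
          · rw [← h1, ← h2] at hab1; omega
          · rw [← h1, ← h2] at hab1; omega
        | succ j' =>
          simp only [Fin.cases_succ]
          exact hdisj' i' j' (fun h => hij (by rw [h]))
    · intro i
      induction i using Fin.cases with
      | zero =>
        intro e he
        simp only [Fin.cases_zero] at he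
        obtain ⟨x, y, hp, hpe⟩ := hp0edges e he
        exact ⟨x, y, hpe, by rw [hpair x y hp]⟩
      | succ i' =>
        intro e he
        simp only [Fin.cases_succ] at he
        obtain ⟨a, b, hab, hab1⟩ := hinv' i' e he
        refine ⟨a, b, hab, ?_⟩
        by_cases h1 : (a, b) ∈ zc (u :: l)
        · have := (hzero a b h1).1
          omega
        · by_cases h2 : (b, a) ∈ zc (u :: l)
          · have := (hzero b a h2).2
            omega
          · rw [chi_eq_zero h1 h2] at hab1
            omega

theorem menger {G : SimpleGraph V} {u v : V} (huv : u ≠ v) (k : ℕ)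
    (hcut : ∀ A : Finset V, u ∈ A → v ∉ A → k ≤ cutP G A) :
    HasEdgeDisjointPaths G u v k := by
  obtain ⟨φ, hφ⟩ := exists_flow huv k hcut
  obtain ⟨P, hdisj, -⟩ := flow_decomp huv k φ hφ
  exact ⟨P, hdisj⟩


/-! ### cutP bridges -/

lemma cutP_comm (G : SimpleGraph V) (A : Finset V) : cutP G A = cutP G Aᶜ := by
  classical
  unfold cutP
  apply Finset.card_nbij (fun p => (p.2, p.1))
  · intro p hp
    simp only [Finset.mem_coe, Finset.mem_filter, Finset.mem_univ, true_and] at hp ⊢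
    refine ⟨Finset.mem_compl.2 hp.2.1, ?_, hp.2.2.symm⟩
    simp only [Finset.mem_compl, not_not]
    exact hp.1
  · intro p _ q _ h
    simp only [Prod.mk.injEq] at h
    exact Prod.ext h.2 h.1
  · intro q hq
    simp only [Finset.coe_filter, Set.mem_setOf_eq, Finset.mem_univ, true_and] at hq
    refine ⟨(q.2, q.1), ?_, rfl⟩
    simp only [Finset.coe_filter, Set.mem_setOf_eq, Finset.mem_univ, true_and]
    have h2 : q.2 ∈ A := by
      have := hq.2.1
      simp only [Finset.mem_compl, not_not] at this
      exact this
    exact ⟨h2, Finset.mem_compl.1 hq.1, hq.2.2.symm⟩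

open scoped Classical in
lemma cutP_fiber (G : SimpleGraph V) (A : Finset V) :
    cutP G A = ∑ a ∈ A, (Finset.univ.filter fun b => b ∉ A ∧ G.Adj a b).card := by
  classical
  unfold cutP
  rw [Finset.card_eq_sum_card_fiberwise (f := fun p : V × V => p.1) (t := A)
    (fun p hp => (Finset.mem_filter.1 hp).2.1)]
  apply Finset.sum_congr rfl
  intro a ha
  apply Finset.card_nbij (fun p => p.2)
  · intro p hp
    simp only [Finset.mem_coe, Finset.mem_filter, Finset.mem_univ, true_and] at hp ⊢
    obtain ⟨⟨h1, h2, h3⟩, h4⟩ := hp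
    rw [h4] at h3
    exact ⟨h2, h3⟩
  · intro p hp q hq hpq
    simp only [Finset.coe_filter, Set.mem_setOf_eq, Finset.mem_univ, true_and] at hp hq
    exact Prod.ext (hp.2.trans hq.2.symm) hpq
  · intro b hb
    simp only [Finset.coe_filter, Set.mem_setOf_eq, Finset.mem_univ, true_and] at hb
    refine ⟨(a, b), ?_, rfl⟩
    simp only [Finset.mem_coe, Finset.mem_filter, Finset.mem_univ, true_and]
    exact ⟨⟨ha, hb.1, hb.2⟩, trivial⟩

noncomputable def nbrF (G : SimpleGraph V) (x : V) : Finset V := by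
  classical exact Finset.univ.filter (fun y => G.Adj x y)

lemma mem_nbrF {G : SimpleGraph V} {x y : V} : y ∈ nbrF G x ↔ G.Adj x y := by
  unfold nbrF
  simp

lemma deg_eq (G : SimpleGraph V) (x : V) : deg G x = (nbrF G x).card := by
  unfold deg
  have : G.neighborSet x = ↑(nbrF G x) := by
    ext y
    simp [mem_nbrF, SimpleGraph.mem_neighborSet]
  rw [this, Set.ncard_coe_finset]

lemma cutP_singleton (G : SimpleGraph V) (u : V) : cutP G {u} = deg G u := by
  classical
  rw [cutP_fiber, Finset.sum_singleton, deg_eq]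
  have hset : (Finset.univ.filter fun b => b ∉ ({u} : Finset V) ∧ G.Adj u b) = nbrF G u := by
    ext b
    simp only [mem_nbrF, Finset.mem_filter, Finset.mem_univ, true_and, Finset.mem_singleton]
    constructor
    · rintro ⟨-, h⟩; exact h
    · intro h; exact ⟨fun hb => G.irrefl (hb ▸ h), h⟩
  rw [hset]

lemma cutP_pair_ge (G : SimpleGraph V) {u w : V} (h : u ≠ w) :
    deg G u + deg G w ≤ cutP G {u, w} + 2 := by
  classical
  rw [cutP_fiber, Finset.sum_pair h]
  have key : ∀ a b : V, a ∈ ({u, w} : Finset V) → b ∈ ({u, w} : Finset V) → a ≠ b →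
      deg G a ≤ (Finset.univ.filter fun c => c ∉ ({u, w} : Finset V) ∧ G.Adj a c).card + 1 := by
    intro a b ha hb hab
    rw [deg_eq]
    have hsub : nbrF G a ⊆
        (Finset.univ.filter fun c => c ∉ ({u, w} : Finset V) ∧ G.Adj a c) ∪ {b} := by
      intro c hc
      rw [mem_nbrF] at hc
      by_cases hcm : c ∈ ({u, w} : Finset V)
      · have hca : c ≠ a := fun hh => (G.irrefl (hh ▸ hc))
        have hcb : c = b := by
          have ha' : a = u ∨ a = w := by simpa using ha
          have hb' : b = u ∨ b = w := by simpa using hb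
          have hc' : c = u ∨ c = w := by simpa using hcm
          rcases ha' with rfl | rfl <;> rcases hb' with rfl | rfl <;>
            rcases hc' with rfl | rfl <;> simp_all
        exact Finset.mem_union_right _ (Finset.mem_singleton.2 hcb)
      · exact Finset.mem_union_left _ (Finset.mem_filter.2 ⟨Finset.mem_univ _, hcm, hc⟩)
    calc (nbrF G a).card ≤ _ := Finset.card_le_card hsub
      _ ≤ _ := Finset.card_union_le _ _
      _ ≤ (Finset.univ.filter fun c => c ∉ ({u, w} : Finset V) ∧ G.Adj a c).card + 1 := by
          simp
  have h1 := key u w (Finset.mem_insert_self _ _) (by simp) h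
  have h2 := key w u (by simp) (Finset.mem_insert_self _ _) h.symm
  omega

lemma cutP_deleteEdges_le (G : SimpleGraph V) (F : Set (Sym2 V)) (Ffin : Finset (Sym2 V))
    (hFF : ∀ e, e ∈ F ↔ e ∈ Ffin) (A : Finset V) :
    cutP G A ≤ cutP (G.deleteEdges F) A + Ffin.card := by
  classical
  have hsub : (Finset.univ.filter fun p : V × V => p.1 ∈ A ∧ p.2 ∉ A ∧ G.Adj p.1 p.2) ⊆
      (Finset.univ.filter fun p : V × V => p.1 ∈ A ∧ p.2 ∉ A ∧ (G.deleteEdges F).Adj p.1 p.2) ∪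
      (Finset.univ.filter fun p : V × V =>
        p.1 ∈ A ∧ p.2 ∉ A ∧ G.Adj p.1 p.2 ∧ s(p.1, p.2) ∈ F) := by
    intro p hp
    simp only [Finset.mem_filter, Finset.mem_univ, true_and] at hp
    by_cases hm : s(p.1, p.2) ∈ F
    · exact Finset.mem_union_right _ (Finset.mem_filter.2
        ⟨Finset.mem_univ _, hp.1, hp.2.1, hp.2.2, hm⟩)
    · refine Finset.mem_union_left _ (Finset.mem_filter.2
        ⟨Finset.mem_univ _, hp.1, hp.2.1, ?_⟩)
      rw [SimpleGraph.deleteEdges_adj]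
      exact ⟨hp.2.2, hm⟩
  have hF2 : (Finset.univ.filter fun p : V × V =>
      p.1 ∈ A ∧ p.2 ∉ A ∧ G.Adj p.1 p.2 ∧ s(p.1, p.2) ∈ F).card ≤ Ffin.card := by
    apply Finset.card_le_card_of_injOn (fun p => s(p.1, p.2))
    · intro p hp
      simp only [Finset.mem_coe, Finset.mem_filter, Finset.mem_univ, true_and] at hp
      exact (hFF _).1 hp.2.2.2
    · intro p hp q hq he
      simp only [Finset.coe_filter, Set.mem_setOf_eq, Finset.mem_univ, true_and] at hp hq
      rcases (Sym2.eq_iff).1 he with ⟨h1, h2⟩ | ⟨h1, h2⟩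
      · exact Prod.ext h1 h2
      · exact absurd (h1 ▸ hp.1) hq.2.1
  calc cutP G A ≤ _ := Finset.card_le_card hsub
    _ ≤ _ + _ := Finset.card_union_le _ _
    _ ≤ cutP (G.deleteEdges F) A + Ffin.card := by
        unfold cutP
        exact add_le_add (le_of_eq (by congr 1; ext; simp only [Finset.mem_filter])) hF2

lemma deg_deleteEdges_le (G : SimpleGraph V) (F : Set (Sym2 V)) (w : V) :
    deg (G.deleteEdges F) w ≤ deg G w := by
  classical
  rw [deg_eq, deg_eq]
  apply Finset.card_le_card
  intro b hb
  rw [mem_nbrF] at hb ⊢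
  exact ((SimpleGraph.deleteEdges_adj).1 hb).1

lemma deg_deleteEdges_ge (G : SimpleGraph V) (F : Set (Sym2 V)) (Ffin : Finset (Sym2 V))
    (hFF : ∀ e, e ∈ F ↔ e ∈ Ffin) (w : V) :
    deg G w ≤ deg (G.deleteEdges F) w + Ffin.card := by
  classical
  rw [deg_eq, deg_eq]
  have hsub : nbrF G w ⊆ nbrF (G.deleteEdges F) w ∪
      (Finset.univ.filter fun b => G.Adj w b ∧ s(w, b) ∈ F) := by
    intro b hb
    rw [mem_nbrF] at hb
    by_cases hm : s(w, b) ∈ F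
    · exact Finset.mem_union_right _ (Finset.mem_filter.2 ⟨Finset.mem_univ _, hb, hm⟩)
    · refine Finset.mem_union_left _ ?_
      rw [mem_nbrF, SimpleGraph.deleteEdges_adj]
      exact ⟨hb, hm⟩
  have hcard : (Finset.univ.filter fun b => G.Adj w b ∧ s(w, b) ∈ F).card ≤ Ffin.card := by
    apply Finset.card_le_card_of_injOn (fun b => s(w, b))
    · intro b hb
      simp only [Finset.mem_coe, Finset.mem_filter, Finset.mem_univ, true_and] at hb
      exact (hFF _).1 hb.2
    · intro b hb c hc he
      simp only [Finset.coe_filter, Set.mem_setOf_eq, Finset.mem_univ, true_and] at hb hc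
      rcases (Sym2.eq_iff).1 he with ⟨-, h2⟩ | ⟨h1, h2⟩
      · exact h2
      · exact absurd (h2 ▸ hb.1) (G.irrefl)
  calc (nbrF G w).card ≤ _ := Finset.card_le_card hsub
    _ ≤ _ := Finset.card_union_le _ _
    _ ≤ _ := by omega


/-! ### Basic facts about `BS n` -/

lemma bsrel_symm {n : ℕ} {x y : Equiv.Perm (Fin n)} (h : BSRel n x y) : BSRel n y x := by
  obtain ⟨i, j, hg, hij, hy⟩ := h
  exact ⟨i, j, hg, hij, by rw [hy, mul_assoc, Equiv.swap_mul_self, mul_one]⟩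

lemma bs_adj_iff {n : ℕ} (x y : Equiv.Perm (Fin n)) :
    (BS n).Adj x y ↔ x ≠ y ∧ BSRel n x y := by
  rw [BS, SimpleGraph.fromRel_adj]
  constructor
  · rintro ⟨hne, h | h⟩
    · exact ⟨hne, h⟩
    · exact ⟨hne, bsrel_symm h⟩
  · rintro ⟨hne, h⟩
    exact ⟨hne, Or.inl h⟩

lemma swap_ne_self {n : ℕ} (x : Equiv.Perm (Fin n)) {i j : Fin n} (hij : i ≠ j) :
    x * Equiv.swap i j ≠ x := by
  intro h
  have h2 : (x * Equiv.swap i j) i = x i := by rw [h]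
  rw [Equiv.Perm.mul_apply, Equiv.swap_apply_left] at h2
  exact hij (x.injective h2).symm

lemma adj_of_gen {n : ℕ} (x : Equiv.Perm (Fin n)) {i j : Fin n}
    (hg : j.val = i.val + 1 ∨ i.val = 0) (hij : i ≠ j) :
    (BS n).Adj x (x * Equiv.swap i j) := by
  rw [bs_adj_iff]
  exact ⟨(swap_ne_self x hij).symm, i, j, hg, hij, rfl⟩

open scoped Classical in
noncomputable def pairsP (n : ℕ) : Finset (Fin n × Fin n) :=
  Finset.univ.filter fun p => (p.2.val = p.1.val + 1 ∨ p.1.val = 0) ∧ p.1 ≠ p.2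

lemma pairsP_lt {n : ℕ} {p : Fin n × Fin n} (hp : p ∈ pairsP n) : p.1.val < p.2.val := by
  classical
  unfold pairsP at hp
  simp only [Finset.mem_filter, Finset.mem_univ, true_and] at hp
  obtain ⟨hg | hg, hne⟩ := hp
  · omega
  · have : p.1.val ≠ p.2.val := fun h => hne (Fin.ext h)
    omega

lemma card_pairsP {n : ℕ} (hn : 3 ≤ n) : (pairsP n).card = 2 * n - 3 := by
  classical
  set P1 : Finset (Fin n × Fin n) :=
    Finset.univ.filter (fun p : Fin n × Fin n => p.2.val = p.1.val + 1) with hP1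
  set P2 : Finset (Fin n × Fin n) :=
    Finset.univ.filter (fun p : Fin n × Fin n => p.1.val = 0 ∧ p.2.val ≠ 0) with hP2
  have hP : pairsP n = P1 ∪ P2 := by
    unfold pairsP
    rw [hP1, hP2]
    ext p
    simp only [Finset.mem_filter, Finset.mem_univ, true_and, Finset.mem_union]
    constructor
    · rintro ⟨hg | hg, hne⟩
      · exact Or.inl hg
      · refine Or.inr ⟨hg, fun h => hne (Fin.ext (by omega))⟩
    · rintro (hg | ⟨hg1, hg2⟩)
      · refine ⟨Or.inl hg, fun h => ?_⟩
        rw [h] at hg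
        omega
      · exact ⟨Or.inr hg1, fun h => hg2 (by rw [← h, hg1])⟩
  have hc1 : P1.card = n - 1 := by
    rw [← Finset.card_range (n - 1), hP1]
    apply Finset.card_nbij (fun p => p.1.val)
    · intro p hp
      simp only [Finset.coe_filter, Set.mem_setOf_eq, Finset.mem_coe, Finset.mem_filter, Finset.mem_univ, true_and] at hp
      have := p.2.isLt
      simp only [Finset.mem_coe, Finset.mem_range]
      omega
    · intro p hp q hq hpq
      simp only [Finset.mem_coe, Finset.mem_filter, Finset.mem_univ, true_and] at hp hq
      have h1 : p.1 = q.1 := Fin.ext hpq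
      have h2 : p.2 = q.2 := Fin.ext (by omega)
      exact Prod.ext h1 h2
    · intro m hm
      simp only [Finset.mem_coe, Finset.mem_range] at hm
      refine ⟨(⟨m, by omega⟩, ⟨m + 1, by omega⟩), ?_, rfl⟩
      simp only [Finset.mem_coe, Finset.mem_filter, Finset.mem_univ, true_and]
  have hc2 : P2.card = n - 1 := by
    rw [← Finset.card_range (n - 1), hP2]
    apply Finset.card_nbij (fun p => p.2.val - 1)
    · intro p hp
      simp only [Finset.coe_filter, Set.mem_setOf_eq, Finset.mem_coe, Finset.mem_filter, Finset.mem_univ, true_and] at hp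
      have := p.2.isLt
      simp only [Finset.mem_coe, Finset.mem_range]
      omega
    · intro p hp q hq hpq
      simp only [Finset.mem_coe, Finset.mem_filter, Finset.mem_univ, true_and] at hp hq
      obtain ⟨hp1, hp2⟩ := hp
      obtain ⟨hq1, hq2⟩ := hq
      have hpq' : p.2.val - 1 = q.2.val - 1 := hpq
      have h1 : p.1 = q.1 := Fin.ext (by omega)
      have h2 : p.2 = q.2 := Fin.ext (by omega)
      exact Prod.ext h1 h2
    · intro m hm
      simp only [Finset.mem_coe, Finset.mem_range] at hm
      exact ⟨(⟨0, by omega⟩, ⟨m + 1, by omega⟩), Finset.mem_coe.2 (Finset.mem_filter.2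
        ⟨Finset.mem_univ _, rfl, Nat.succ_ne_zero m⟩), rfl⟩
  have hc12 : (P1 ∩ P2).card = 1 := by
    have : P1 ∩ P2 = {(⟨0, by omega⟩, ⟨1, by omega⟩)} := by
      rw [hP1, hP2]
      ext p
      simp only [Finset.mem_inter, Finset.mem_filter, Finset.mem_univ, true_and,
        Finset.mem_singleton]
      constructor
      · rintro ⟨h1, h2, h3⟩
        have e1 : p.1 = (⟨0, by omega⟩ : Fin n) := Fin.ext h2
        have e2 : p.2 = (⟨1, by omega⟩ : Fin n) := Fin.ext (show p.2.val = 1 by omega)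
        exact Prod.ext e1 e2
      · intro h
        rw [h]
        exact ⟨rfl, rfl, Nat.one_ne_zero⟩
    rw [this, Finset.card_singleton]
  have := Finset.card_union_add_card_inter P1 P2
  rw [hP] at *
  omega

open scoped Classical in
noncomputable def genSet (n : ℕ) : Finset (Equiv.Perm (Fin n)) :=
  (pairsP n).image fun p => Equiv.swap p.1 p.2

lemma swap_inj_lt {n : ℕ} {i j i' j' : Fin n} (h1 : i.val < j.val) (h2 : i'.val < j'.val)
    (he : Equiv.swap i j = Equiv.swap i' j') : i = i' ∧ j = j' := by
  have hij : i ≠ j := fun h => by rw [h] at h1; omega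
  have hij' : i' ≠ j' := fun h => by rw [h] at h2; omega
  have happ : Equiv.swap i' j' i = j := by rw [← he, Equiv.swap_apply_left]
  by_cases hii : i = i'
  · subst hii
    have : Equiv.swap i j' i = j' := Equiv.swap_apply_left _ _
    rw [← he, Equiv.swap_apply_left] at this
    exact ⟨rfl, this⟩
  · by_cases hij2 : i = j'
    · exfalso
      subst hij2
      rw [Equiv.swap_apply_right] at happ
      subst happ
      omega
    · exfalso
      rw [Equiv.swap_apply_of_ne_of_ne hii hij2] at happ
      rw [happ] at h1
      omega

lemma card_genSet {n : ℕ} (hn : 3 ≤ n) : (genSet n).card = 2 * n - 3 := by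
  classical
  rw [genSet, Finset.card_image_of_injOn, card_pairsP hn]
  intro p hp q hq he
  simp only [Finset.mem_coe] at hp hq
  obtain ⟨h1, h2⟩ := swap_inj_lt (pairsP_lt hp) (pairsP_lt hq) he
  exact Prod.ext h1 h2

lemma nbrF_BS_eq {n : ℕ} (x : Equiv.Perm (Fin n)) :
    nbrF (BS n) x = (genSet n).image (fun t => x * t) := by
  classical
  ext y
  rw [mem_nbrF, bs_adj_iff]
  constructor
  · rintro ⟨hne, i, j, hg, hij, hy⟩
    rw [Finset.mem_image]
    refine ⟨Equiv.swap i j, ?_, hy.symm⟩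
    rw [genSet, Finset.mem_image]
    refine ⟨(i, j), ?_, rfl⟩
    unfold pairsP
    simp only [Finset.mem_filter, Finset.mem_univ, true_and]
    exact ⟨hg, hij⟩
  · intro hy
    rw [Finset.mem_image] at hy
    obtain ⟨t, ht, hty⟩ := hy
    rw [genSet, Finset.mem_image] at ht
    obtain ⟨p, hp, hpt⟩ := ht
    unfold pairsP at hp
    simp only [Finset.mem_filter, Finset.mem_univ, true_and] at hp
    have := adj_of_gen x hp.1 hp.2
    rw [hpt, hty] at this
    rw [bs_adj_iff] at this
    exact this

lemma deg_BS {n : ℕ} (hn : 3 ≤ n) (x : Equiv.Perm (Fin n)) :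
    deg (BS n) x = 2 * n - 3 := by
  classical
  rw [deg_eq, nbrF_BS_eq, Finset.card_image_of_injective _ (mul_right_injective x),
    card_genSet hn]

lemma adj_sign {n : ℕ} {x y : Equiv.Perm (Fin n)} (h : (BS n).Adj x y) :
    Equiv.Perm.sign y = - Equiv.Perm.sign x := by
  classical
  rw [bs_adj_iff] at h
  obtain ⟨-, i, j, hg, hij, hy⟩ := h
  rw [hy, Equiv.Perm.sign_mul, Equiv.Perm.sign_swap hij, mul_neg_one]

lemma no_triangle {n : ℕ} {x y z : Equiv.Perm (Fin n)} (h1 : (BS n).Adj x y)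
    (h2 : (BS n).Adj y z) (h3 : (BS n).Adj x z) : False := by
  have e1 := adj_sign h1
  have e2 := adj_sign h2
  have e3 := adj_sign h3
  have h4 : Equiv.Perm.sign z = Equiv.Perm.sign y := by rw [e3]; exact e1.symm
  have h5 : Equiv.Perm.sign y = -Equiv.Perm.sign y := (e2.symm.trans h4).symm
  rcases Int.units_eq_one_or (Equiv.Perm.sign y) with h | h <;> rw [h] at h5 <;>
    exact absurd h5 (by decide)

lemma cut3_aux {n : ℕ} (hn : 3 ≤ n) {x y z : Equiv.Perm (Fin n)} (hxy : x ≠ y) (hxz : x ≠ z)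
    (hyz : y ≠ z) (hnadj : ¬(BS n).Adj y z) :
    3 * (2 * n - 3) ≤ cutP (BS n) {x, y, z} + 4 := by
  classical
  set A : Finset (Equiv.Perm (Fin n)) := {x, y, z} with hA
  have hxA : x ∉ ({y, z} : Finset (Equiv.Perm (Fin n))) := by simp [hxy, hxz]
  have hsum : cutP (BS n) A =
      (Finset.univ.filter fun b => b ∉ A ∧ (BS n).Adj x b).card +
      ((Finset.univ.filter fun b => b ∉ A ∧ (BS n).Adj y b).card +
       (Finset.univ.filter fun b => b ∉ A ∧ (BS n).Adj z b).card) := by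
    rw [cutP_fiber, hA, Finset.sum_insert hxA, Finset.sum_pair hyz]
  have key : ∀ (a : Equiv.Perm (Fin n)) (B : Finset (Equiv.Perm (Fin n))),
      (A.filter fun b => (BS n).Adj a b) ⊆ B →
      deg (BS n) a ≤ (Finset.univ.filter fun b => b ∉ A ∧ (BS n).Adj a b).card + B.card := by
    intro a B hB
    rw [deg_eq]
    have hsub : nbrF (BS n) a ⊆
        (Finset.univ.filter fun b => b ∉ A ∧ (BS n).Adj a b) ∪ B := by
      intro c hc
      rw [mem_nbrF] at hc
      by_cases hcA : c ∈ A
      · exact Finset.mem_union_right _ (hB (Finset.mem_filter.2 ⟨hcA, hc⟩))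
      · exact Finset.mem_union_left _ (Finset.mem_filter.2 ⟨Finset.mem_univ _, hcA, hc⟩)
    calc (nbrF (BS n) a).card ≤ _ := Finset.card_le_card hsub
      _ ≤ _ := Finset.card_union_le _ _
  have hx : deg (BS n) x ≤ (Finset.univ.filter fun b => b ∉ A ∧ (BS n).Adj x b).card + 2 := by
    have h := key x {y, z} ?_
    · calc deg (BS n) x ≤ _ := h
        _ ≤ _ + 2 := by
          have : ({y, z} : Finset (Equiv.Perm (Fin n))).card ≤ 2 := Finset.card_insert_le _ _
            |>.trans (by simp)
          omega
    · intro b hb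
      rw [Finset.mem_filter] at hb
      have hbA : b ∈ A := hb.1
      have hbx : b ≠ x := fun h => (BS n).irrefl (h ▸ hb.2)
      rw [hA] at hbA
      rcases Finset.mem_insert.1 hbA with h | h
      · exact absurd h hbx
      · exact h
  have hy' : deg (BS n) y ≤ (Finset.univ.filter fun b => b ∉ A ∧ (BS n).Adj y b).card + 1 := by
    have h := key y {x} ?_
    · simpa using h
    · intro b hb
      rw [Finset.mem_filter] at hb
      have hbA : b ∈ A := hb.1
      have hby : b ≠ y := fun h => (BS n).irrefl (h ▸ hb.2)
      have hbz : b ≠ z := fun h => hnadj (h ▸ hb.2)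
      rw [hA] at hbA
      simp only [Finset.mem_insert, Finset.mem_singleton] at hbA
      rcases hbA with h | h | h
      · simp [h]
      · exact absurd h hby
      · exact absurd h hbz
  have hz' : deg (BS n) z ≤ (Finset.univ.filter fun b => b ∉ A ∧ (BS n).Adj z b).card + 1 := by
    have h := key z {x} ?_
    · simpa using h
    · intro b hb
      rw [Finset.mem_filter] at hb
      have hbA : b ∈ A := hb.1
      have hbz : b ≠ z := fun h => (BS n).irrefl (h ▸ hb.2)
      have hby : b ≠ y := fun h => hnadj ((BS n).adj_comm y z |>.2 (h ▸ hb.2))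
      rw [hA] at hbA
      simp only [Finset.mem_insert, Finset.mem_singleton] at hbA
      rcases hbA with h | h | h
      · simp [h]
      · exact absurd h hby
      · exact absurd h hbz
  rw [deg_BS hn] at hx hy' hz'
  omega

end BSAux

namespace BSAux

open Equiv

/-! ### The copy structure of `BS (k+1)` -/

def emb {k : ℕ} (i : Fin (k + 1)) (σ : Equiv.Perm (Fin k)) : Equiv.Perm (Fin (k + 1)) :=
  (finSuccEquiv' (Fin.last k)).trans ((Equiv.optionCongr σ).trans (finSuccEquiv' i).symm)

lemma emb_apply_last {k : ℕ} (i : Fin (k + 1)) (σ : Equiv.Perm (Fin k)) :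
    emb i σ (Fin.last k) = i := by
  unfold emb
  simp [Equiv.trans_apply, finSuccEquiv'_at, finSuccEquiv'_symm_none]

lemma emb_apply_castSucc {k : ℕ} (i : Fin (k + 1)) (σ : Equiv.Perm (Fin k)) (j : Fin k) :
    emb i σ (Fin.castSucc j) = i.succAbove (σ j) := by
  unfold emb
  have h1 : (finSuccEquiv' (Fin.last k)) (Fin.castSucc j) = some j := by
    have h2 : (finSuccEquiv' (Fin.last k)).symm (some j) = Fin.castSucc j := by
      rw [finSuccEquiv'_symm_some, Fin.succAbove_last]
    rw [← h2, Equiv.apply_symm_apply]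
  simp [Equiv.trans_apply, h1, Equiv.optionCongr_apply, finSuccEquiv'_symm_some]

lemma emb_injective {k : ℕ} (i : Fin (k + 1)) : Function.Injective (emb i) := by
  intro σ τ h
  apply Equiv.ext
  intro j
  have hcongr : emb i σ (Fin.castSucc j) = emb i τ (Fin.castSucc j) := by rw [h]
  rw [emb_apply_castSucc, emb_apply_castSucc] at hcongr
  exact Fin.succAbove_right_injective hcongr

lemma emb_surj {k : ℕ} (i : Fin (k + 1)) (x : Equiv.Perm (Fin (k + 1)))
    (hx : x (Fin.last k) = i) : ∃ σ, emb i σ = x := by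
  classical
  set X : Option (Fin k) ≃ Option (Fin k) :=
    ((finSuccEquiv' (Fin.last k)).symm.trans x).trans (finSuccEquiv' i) with hX
  have hXnone : X none = none := by
    rw [hX]
    simp [Equiv.trans_apply, finSuccEquiv'_symm_none, hx, finSuccEquiv'_at]
  refine ⟨X.removeNone, ?_⟩
  have hsome : ∀ j : Fin k, some (X.removeNone j) = X (some j) := by
    intro j
    apply Equiv.removeNone_some
    cases h : X (some j) with
    | none =>
      exfalso
      have := X.injective (h.trans hXnone.symm)
      simp at this
    | some val => exact ⟨val, rfl⟩
  apply Equiv.ext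
  intro p
  induction p using Fin.lastCases with
  | last => rw [emb_apply_last, hx]
  | cast j =>
    rw [emb_apply_castSucc]
    have h := hsome j
    rw [hX] at h
    simp only [Equiv.trans_apply, finSuccEquiv'_symm_some] at h
    rw [Fin.succAbove_last] at h
    have h2 := congrArg (finSuccEquiv' i).symm h.symm
    rw [Equiv.symm_apply_apply, finSuccEquiv'_symm_some] at h2
    exact h2.symm

lemma emb_mul_swap {k : ℕ} (i : Fin (k + 1)) (σ : Equiv.Perm (Fin k)) (a b : Fin k) :
    emb i σ * Equiv.swap (Fin.castSucc a) (Fin.castSucc b) = emb i (σ * Equiv.swap a b) := by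
  classical
  apply Equiv.ext
  intro p
  induction p using Fin.lastCases with
  | last =>
    rw [Equiv.Perm.mul_apply, Equiv.swap_apply_of_ne_of_ne (Fin.castSucc_lt_last a).ne'
      (Fin.castSucc_lt_last b).ne', emb_apply_last, emb_apply_last]
  | cast j =>
    rw [Equiv.Perm.mul_apply, ((Fin.castSucc_injective k).swap_apply a b j : _),
      emb_apply_castSucc, emb_apply_castSucc, Equiv.Perm.mul_apply]

lemma adj_emb_iff {k : ℕ} (hk : 0 < k) (i : Fin (k + 1)) (σ τ : Equiv.Perm (Fin k)) :
    (BS (k + 1)).Adj (emb i σ) (emb i τ) ↔ (BS k).Adj σ τ := by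
  classical
  constructor
  · intro h
    rw [bs_adj_iff] at h
    obtain ⟨hne, c, d, hg, hcd, hy⟩ := h
    have hdlast : d ≠ Fin.last k := by
      intro hd
      subst hd
      have hc : c ≠ Fin.last k := hcd
      obtain ⟨c', hc'⟩ := Fin.exists_castSucc_eq.2 hc
      have happ : emb i τ (Fin.last k) = emb i σ c := by
        rw [hy, Equiv.Perm.mul_apply, Equiv.swap_apply_right]
      rw [emb_apply_last, ← hc', emb_apply_castSucc] at happ
      exact Fin.succAbove_ne i (σ c') happ.symm
    have hclast : c ≠ Fin.last k := by
      intro hc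
      subst hc
      rcases hg with hg | hg
      · have := d.isLt
        rw [Fin.val_last] at hg
        omega
      · rw [Fin.val_last] at hg
        omega
    obtain ⟨a, ha⟩ := Fin.exists_castSucc_eq.2 hclast
    obtain ⟨b, hb⟩ := Fin.exists_castSucc_eq.2 hdlast
    have hy2 : emb i τ = emb i (σ * Equiv.swap a b) := by
      rw [hy, ← ha, ← hb, emb_mul_swap]
    have hτ : τ = σ * Equiv.swap a b := emb_injective i hy2
    rw [bs_adj_iff]
    refine ⟨fun hh => hne (by rw [hh]), a, b, ?_, ?_, hτ⟩
    · rcases hg with hg | hg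
      · left
        rw [← ha, ← hb, Fin.coe_castSucc, Fin.coe_castSucc] at hg
        exact hg
      · right
        rw [← ha, Fin.coe_castSucc] at hg
        exact hg
    · intro hab
      rw [hab] at ha
      exact hcd (ha.symm.trans hb)
  · intro h
    rw [bs_adj_iff] at h
    obtain ⟨hne, a, b, hg, hab, hτ⟩ := h
    have hy : emb i τ = emb i σ * Equiv.swap (Fin.castSucc a) (Fin.castSucc b) := by
      rw [emb_mul_swap, hτ]
    rw [bs_adj_iff]
    refine ⟨fun hh => hne (emb_injective i hh), Fin.castSucc a, Fin.castSucc b, ?_, ?_, hy⟩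
    · rcases hg with hg | hg
      · left
        rw [Fin.coe_castSucc, Fin.coe_castSucc]
        exact hg
      · right
        rw [Fin.coe_castSucc]
        exact hg
    · exact fun hh => hab (Fin.castSucc_injective k hh)

def posm (k : ℕ) : Fin (k + 1) := ⟨k - 1, by omega⟩

def pos0 (k : ℕ) : Fin (k + 1) := ⟨0, by omega⟩

lemma posm_ne_last {k : ℕ} (hk : 0 < k) : posm k ≠ Fin.last k := by
  intro h
  have := congrArg Fin.val h
  rw [Fin.val_last] at this
  unfold posm at this
  simp at this
  omega

lemma pos0_ne_last {k : ℕ} (hk : 0 < k) : pos0 k ≠ Fin.last k := by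
  intro h
  have := congrArg Fin.val h
  rw [Fin.val_last] at this
  unfold pos0 at this
  simp at this
  omega

lemma cross_adj_cases {k : ℕ} (hk : 0 < k) {x y : Equiv.Perm (Fin (k + 1))}
    (h : (BS (k + 1)).Adj x y) (hval : x (Fin.last k) ≠ y (Fin.last k)) :
    y = x * Equiv.swap (posm k) (Fin.last k) ∨ y = x * Equiv.swap (pos0 k) (Fin.last k) := by
  classical
  rw [bs_adj_iff] at h
  obtain ⟨hne, c, d, hg, hcd, hy⟩ := h
  have hclast : c ≠ Fin.last k := by
    intro hc
    subst hc
    rcases hg with hg | hg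
    · have := d.isLt
      rw [Fin.val_last] at hg
      omega
    · rw [Fin.val_last] at hg
      omega
  have hdlast : d = Fin.last k := by
    by_contra hd
    apply hval
    rw [hy, Equiv.Perm.mul_apply, Equiv.swap_apply_of_ne_of_ne (Ne.symm hclast) (Ne.symm hd)]
  subst hdlast
  rcases hg with hg | hg
  · left
    have hc : c = posm k := by
      apply Fin.ext
      rw [Fin.val_last] at hg
      unfold posm
      simp
      omega
    rw [hy, hc]
  · right
    have hc : c = pos0 k := by
      apply Fin.ext
      unfold pos0
      exact hg
    rw [hy, hc]

lemma adj_nbrm {k : ℕ} (hk : 0 < k) (x : Equiv.Perm (Fin (k + 1))) :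
    (BS (k + 1)).Adj x (x * Equiv.swap (posm k) (Fin.last k)) := by
  apply adj_of_gen
  · left
    rw [Fin.val_last]
    unfold posm
    simp
    omega
  · exact posm_ne_last hk

lemma adj_nbr0 {k : ℕ} (hk : 0 < k) (x : Equiv.Perm (Fin (k + 1))) :
    (BS (k + 1)).Adj x (x * Equiv.swap (pos0 k) (Fin.last k)) := by
  apply adj_of_gen
  · right
    rfl
  · exact pos0_ne_last hk

lemma val_nbrm {k : ℕ} (x : Equiv.Perm (Fin (k + 1))) :
    (x * Equiv.swap (posm k) (Fin.last k)) (Fin.last k) = x (posm k) := by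
  rw [Equiv.Perm.mul_apply, Equiv.swap_apply_right]

lemma val_nbr0 {k : ℕ} (x : Equiv.Perm (Fin (k + 1))) :
    (x * Equiv.swap (pos0 k) (Fin.last k)) (Fin.last k) = x (pos0 k) := by
  rw [Equiv.Perm.mul_apply, Equiv.swap_apply_right]

lemma val_nbrm_ne {k : ℕ} (hk : 0 < k) (x : Equiv.Perm (Fin (k + 1))) :
    x (posm k) ≠ x (Fin.last k) :=
  fun h => posm_ne_last hk (x.injective h)

lemma val_nbr0_ne {k : ℕ} (hk : 0 < k) (x : Equiv.Perm (Fin (k + 1))) :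
    x (pos0 k) ≠ x (Fin.last k) :=
  fun h => pos0_ne_last hk (x.injective h)

lemma posm_ne_pos0 {k : ℕ} (hk : 2 ≤ k) : posm k ≠ pos0 k := by
  intro h
  have := congrArg Fin.val h
  unfold posm pos0 at this
  simp at this
  omega

lemma val_nbrm_ne_nbr0 {k : ℕ} (hk : 2 ≤ k) (x : Equiv.Perm (Fin (k + 1))) :
    x (posm k) ≠ x (pos0 k) :=
  fun h => posm_ne_pos0 hk (x.injective h)

lemma perm_with2 {N : ℕ} {p q v1 v2 : Fin N} (hpq : p ≠ q) (hv : v1 ≠ v2) :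
    ∃ x : Equiv.Perm (Fin N), x p = v1 ∧ x q = v2 := by
  classical
  set τ : Equiv.Perm (Fin N) := Equiv.swap p v1 with hτ
  have h1 : τ p = v1 := Equiv.swap_apply_left p v1
  have hw : τ q ≠ v1 := by
    intro h
    exact hpq (τ.injective (h.trans h1.symm)).symm
  refine ⟨Equiv.swap (τ q) v2 * τ, ?_, ?_⟩
  · rw [Equiv.Perm.mul_apply, h1, Equiv.swap_apply_of_ne_of_ne (Ne.symm hw) hv]
  · rw [Equiv.Perm.mul_apply, Equiv.swap_apply_left]

end BSAux
namespace BSAux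

open Finset Equiv

variable {k : ℕ}

open scoped Classical in
noncomputable def aF (k : ℕ) (A : Finset (Equiv.Perm (Fin (k + 1)))) (i : Fin (k + 1)) : ℕ :=
  (A.filter fun x => x (Fin.last k) = i).card

open scoped Classical in
noncomputable def At (k : ℕ) (A : Finset (Equiv.Perm (Fin (k + 1)))) (i : Fin (k + 1)) :
    Finset (Equiv.Perm (Fin k)) :=
  Finset.univ.filter fun σ => emb i σ ∈ A

lemma card_At (A : Finset (Equiv.Perm (Fin (k + 1)))) (i : Fin (k + 1)) :
    (At k A i).card = aF k A i := by
  classical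
  unfold At aF
  apply Finset.card_nbij (emb i)
  · intro σ hσ
    simp only [Finset.mem_coe, Finset.mem_filter, Finset.mem_univ, true_and] at hσ ⊢
    exact ⟨hσ, emb_apply_last i σ⟩
  · intro σ _ τ _ h
    exact emb_injective i h
  · intro x hx
    simp only [Finset.mem_coe, Finset.mem_filter] at hx
    obtain ⟨σ, hσ⟩ := emb_surj i x hx.2
    refine ⟨σ, ?_, hσ⟩
    simp only [Finset.mem_coe, Finset.mem_filter, Finset.mem_univ, true_and]
    rw [hσ]
    exact hx.1

lemma At_compl (A : Finset (Equiv.Perm (Fin (k + 1)))) (i : Fin (k + 1)) :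
    (At k A i)ᶜ = At k Aᶜ i := by
  classical
  unfold At
  ext σ
  simp [Finset.mem_compl]

lemma aF_add_compl (A : Finset (Equiv.Perm (Fin (k + 1)))) (i : Fin (k + 1)) :
    aF k A i + aF k Aᶜ i = k.factorial := by
  classical
  rw [← card_At, ← card_At, ← At_compl, Finset.card_add_card_compl]
  rw [Fintype.card_perm, Fintype.card_fin]

lemma aF_le (A : Finset (Equiv.Perm (Fin (k + 1)))) (i : Fin (k + 1)) :
    aF k A i ≤ k.factorial := by
  have := aF_add_compl A i
  omega

lemma sum_aF (A : Finset (Equiv.Perm (Fin (k + 1)))) : ∑ i, aF k A i = A.card := by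
  classical
  unfold aF
  exact (Finset.card_eq_sum_card_fiberwise
    (f := fun x : Equiv.Perm (Fin (k + 1)) => x (Fin.last k)) (s := A) (t := Finset.univ)
    (fun x _ => Finset.mem_univ _)).symm

lemma full_val_mem {A : Finset (Equiv.Perm (Fin (k + 1)))} {i : Fin (k + 1)}
    (h : aF k A i = k.factorial) : ∀ x, x (Fin.last k) = i → x ∈ A := by
  classical
  intro x hx
  have h0 := aF_add_compl A i
  have h1 : aF k Aᶜ i = 0 := by omega
  unfold aF at h1
  rw [Finset.card_eq_zero] at h1
  by_contra hxA
  have : x ∈ Aᶜ.filter fun y => y (Fin.last k) = i :=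
    Finset.mem_filter.2 ⟨Finset.mem_compl.2 hxA, hx⟩
  rw [h1] at this
  exact absurd this (Finset.notMem_empty x)

lemma empty_val_mem {A : Finset (Equiv.Perm (Fin (k + 1)))} {i : Fin (k + 1)}
    (h : aF k A i = 0) : ∀ x, x (Fin.last k) = i → x ∉ A := by
  classical
  intro x hx hxA
  unfold aF at h
  rw [Finset.card_eq_zero] at h
  have : x ∈ A.filter fun y => y (Fin.last k) = i := Finset.mem_filter.2 ⟨hxA, hx⟩
  rw [h] at this
  exact absurd this (Finset.notMem_empty x)

open scoped Classical in
noncomputable def sameCut (k : ℕ) (A : Finset (Equiv.Perm (Fin (k + 1)))) (i : Fin (k + 1)) : ℕ :=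
  (Finset.univ.filter fun p : Equiv.Perm (Fin (k + 1)) × Equiv.Perm (Fin (k + 1)) =>
    (p.1 ∈ A ∧ p.2 ∉ A ∧ (BS (k + 1)).Adj p.1 p.2) ∧
    p.1 (Fin.last k) = p.2 (Fin.last k) ∧ p.1 (Fin.last k) = i).card

open scoped Classical in
noncomputable def crossCut (k : ℕ) (A : Finset (Equiv.Perm (Fin (k + 1)))) : ℕ :=
  (Finset.univ.filter fun p : Equiv.Perm (Fin (k + 1)) × Equiv.Perm (Fin (k + 1)) =>
    (p.1 ∈ A ∧ p.2 ∉ A ∧ (BS (k + 1)).Adj p.1 p.2) ∧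
    p.1 (Fin.last k) ≠ p.2 (Fin.last k)).card

lemma cut_split (A : Finset (Equiv.Perm (Fin (k + 1)))) :
    cutP (BS (k + 1)) A = (∑ i, sameCut k A i) + crossCut k A := by
  classical
  have e0 : cutP (BS (k + 1)) A =
      (Finset.univ.filter fun p : Equiv.Perm (Fin (k + 1)) × Equiv.Perm (Fin (k + 1)) =>
        p.1 ∈ A ∧ p.2 ∉ A ∧ (BS (k + 1)).Adj p.1 p.2).card := by
    unfold cutP
    congr 1
  have hsplit := Finset.card_filter_add_card_filter_not
    (p := fun p : Equiv.Perm (Fin (k + 1)) × Equiv.Perm (Fin (k + 1)) =>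
      p.1 (Fin.last k) = p.2 (Fin.last k))
    (s := Finset.univ.filter fun p : Equiv.Perm (Fin (k + 1)) × Equiv.Perm (Fin (k + 1)) =>
      p.1 ∈ A ∧ p.2 ∉ A ∧ (BS (k + 1)).Adj p.1 p.2)
  rw [Finset.filter_filter, Finset.filter_filter] at hsplit
  have e2 : (Finset.univ.filter
      fun p : Equiv.Perm (Fin (k + 1)) × Equiv.Perm (Fin (k + 1)) =>
        (p.1 ∈ A ∧ p.2 ∉ A ∧ (BS (k + 1)).Adj p.1 p.2) ∧
        ¬p.1 (Fin.last k) = p.2 (Fin.last k)).card = crossCut k A := by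
    unfold crossCut
    congr 1
  have e1 : (Finset.univ.filter
      fun p : Equiv.Perm (Fin (k + 1)) × Equiv.Perm (Fin (k + 1)) =>
        (p.1 ∈ A ∧ p.2 ∉ A ∧ (BS (k + 1)).Adj p.1 p.2) ∧
        p.1 (Fin.last k) = p.2 (Fin.last k)).card = ∑ i, sameCut k A i := by
    rw [Finset.card_eq_sum_card_fiberwise
      (f := fun p : Equiv.Perm (Fin (k + 1)) × Equiv.Perm (Fin (k + 1)) => p.1 (Fin.last k))
      (t := Finset.univ) (fun p _ => Finset.mem_univ _)]
    apply Finset.sum_congr rfl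
    intro i _
    rw [Finset.filter_filter]
    unfold sameCut
    congr 1
    apply Finset.filter_congr
    intro p _
    tauto
  omega

lemma sameCut_eq (hk : 0 < k) (A : Finset (Equiv.Perm (Fin (k + 1)))) (i : Fin (k + 1)) :
    sameCut k A i = cutP (BS k) (At k A i) := by
  classical
  unfold sameCut cutP
  symm
  apply Finset.card_nbij (fun q : Equiv.Perm (Fin k) × Equiv.Perm (Fin k) =>
    (emb i q.1, emb i q.2))
  · intro q hq
    simp only [Finset.mem_coe, Finset.mem_filter, Finset.mem_univ, true_and] at hq ⊢
    obtain ⟨h1, h2, h3⟩ := hq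
    unfold At at h1 h2
    simp only [Finset.mem_filter, Finset.mem_univ, true_and] at h1 h2
    exact ⟨⟨h1, h2, (adj_emb_iff hk i q.1 q.2).2 h3⟩,
      by rw [emb_apply_last, emb_apply_last], emb_apply_last i q.1⟩
  · intro q _ r _ h
    simp only [Prod.mk.injEq] at h
    exact Prod.ext (emb_injective i h.1) (emb_injective i h.2)
  · intro p hp
    simp only [Finset.mem_coe, Finset.mem_filter, Finset.mem_univ, true_and] at hp
    obtain ⟨⟨h1, h2, h3⟩, h4, h5⟩ := hp
    obtain ⟨σ, hσ⟩ := emb_surj i p.1 h5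
    obtain ⟨τ, hτ⟩ := emb_surj i p.2 (by rw [← h4]; exact h5)
    refine ⟨(σ, τ), ?_, by show (emb i σ, emb i τ) = p; rw [hσ, hτ]⟩
    simp only [Finset.mem_coe, Finset.mem_filter, Finset.mem_univ, true_and]
    unfold At
    simp only [Finset.mem_filter, Finset.mem_univ, true_and]
    refine ⟨by rw [hσ]; exact h1, by rw [hτ]; exact h2, ?_⟩
    rw [← adj_emb_iff hk i σ τ, hσ, hτ]
    exact h3

lemma pair_cut {N : ℕ} (hN : 3 ≤ N) (B : Finset (Equiv.Perm (Fin N))) (hB : B.card = 2) :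
    4 * N - 8 ≤ cutP (BS N) B := by
  obtain ⟨a, b, hab, rfl⟩ := Finset.card_eq_two.1 hB
  have h1 := cutP_pair_ge (BS N) hab
  rw [deg_BS hN, deg_BS hN] at h1
  omega

lemma mid_cut {N : ℕ} (hN : 3 ≤ N)
    (IH : ∀ B : Finset (Equiv.Perm (Fin N)), 3 ≤ B.card → 3 ≤ Bᶜ.card →
      4 * N - 8 ≤ cutP (BS N) B)
    (B : Finset (Equiv.Perm (Fin N))) (h2 : 2 ≤ B.card) (h2c : 2 ≤ Bᶜ.card) :
    4 * N - 8 ≤ cutP (BS N) B := by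
  by_cases hB3 : 3 ≤ B.card
  · by_cases hBc3 : 3 ≤ Bᶜ.card
    · exact IH B hB3 hBc3
    · have hBc2 : Bᶜ.card = 2 := by omega
      rw [cutP_comm]
      exact pair_cut hN Bᶜ hBc2
  · have hB2 : B.card = 2 := by omega
    exact pair_cut hN B hB2

lemma single_cut {N : ℕ} (hN : 3 ≤ N) (B : Finset (Equiv.Perm (Fin N))) (hB : B.card = 1) :
    2 * N - 3 ≤ cutP (BS N) B := by
  obtain ⟨a, rfl⟩ := Finset.card_eq_one.1 hB
  rw [cutP_singleton, deg_BS hN]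

lemma small_cut {N : ℕ} (hN : 3 ≤ N)
    (IH : ∀ B : Finset (Equiv.Perm (Fin N)), 3 ≤ B.card → 3 ≤ Bᶜ.card →
      4 * N - 8 ≤ cutP (BS N) B)
    (B : Finset (Equiv.Perm (Fin N))) (h1 : 1 ≤ B.card) (h1c : 1 ≤ Bᶜ.card) :
    2 * N - 3 ≤ cutP (BS N) B := by
  by_cases hB2 : 2 ≤ B.card
  · by_cases hBc2 : 2 ≤ Bᶜ.card
    · have := mid_cut hN IH B hB2 hBc2
      omega
    · have hBc1 : Bᶜ.card = 1 := by omega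
      rw [cutP_comm]
      exact single_cut hN Bᶜ hBc1
  · exact single_cut hN B (by omega)

end BSAux
namespace BSAux

open Finset Equiv

lemma crossCut_ge_sub {k : ℕ} (A S : Finset (Equiv.Perm (Fin (k + 1))))
    (hS : ∀ w ∈ S, w ∈ A ∧ ∃ b, (BS (k + 1)).Adj w b ∧ b ∉ A ∧
      w (Fin.last k) ≠ b (Fin.last k)) :
    S.card ≤ crossCut k A := by
  classical
  unfold crossCut
  apply Finset.card_le_card_of_injOn (fun w =>
    (w, if h : ∃ b, (BS (k + 1)).Adj w b ∧ b ∉ A ∧ w (Fin.last k) ≠ b (Fin.last k)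
      then h.choose else w))
  · intro w hw
    obtain ⟨hwA, hex⟩ := hS w hw
    simp only [Finset.mem_coe]
    rw [dif_pos hex]
    obtain ⟨h1, h2, h3⟩ := hex.choose_spec
    simp only [Finset.mem_filter, Finset.mem_univ, true_and]
    exact ⟨⟨hwA, h2, h1⟩, h3⟩
  · intro w _ w' _ h
    exact congrArg Prod.fst h

lemma crossCut_ge_sub' {k : ℕ} (A S : Finset (Equiv.Perm (Fin (k + 1))))
    (hS : ∀ w ∈ S, w ∉ A ∧ ∃ b, (BS (k + 1)).Adj b w ∧ b ∈ A ∧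
      b (Fin.last k) ≠ w (Fin.last k)) :
    S.card ≤ crossCut k A := by
  classical
  unfold crossCut
  apply Finset.card_le_card_of_injOn (fun w =>
    ((if h : ∃ b, (BS (k + 1)).Adj b w ∧ b ∈ A ∧ b (Fin.last k) ≠ w (Fin.last k)
      then h.choose else w), w))
  · intro w hw
    obtain ⟨hwA, hex⟩ := hS w hw
    simp only [Finset.mem_coe]
    rw [dif_pos hex]
    obtain ⟨h1, h2, h3⟩ := hex.choose_spec
    simp only [Finset.mem_filter, Finset.mem_univ, true_and]
    exact ⟨⟨h2, hwA, h1⟩, h3⟩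
  · intro w _ w' _ h
    exact congrArg Prod.snd h

lemma nbrm_ne_nbr0 {k : ℕ} (hk : 2 ≤ k) (w : Equiv.Perm (Fin (k + 1))) :
    w * Equiv.swap (posm k) (Fin.last k) ≠ w * Equiv.swap (pos0 k) (Fin.last k) := by
  intro h
  have h2 : Equiv.swap (posm k) (Fin.last k) = Equiv.swap (pos0 k) (Fin.last k) :=
    mul_left_cancel h
  have h3 := swap_inj_lt (i := posm k) (j := Fin.last k) (i' := pos0 k) (j' := Fin.last k)
    (by unfold posm; rw [Fin.val_last]; simp; omega)
    (by unfold pos0; rw [Fin.val_last]; simp; omega) h2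
  exact posm_ne_pos0 hk h3.1

lemma crossCut_ge_two {k : ℕ} (hk : 2 ≤ k) (A S : Finset (Equiv.Perm (Fin (k + 1))))
    (hS : ∀ w ∈ S, w ∈ A ∧ w * Equiv.swap (posm k) (Fin.last k) ∉ A ∧
      w * Equiv.swap (pos0 k) (Fin.last k) ∉ A) :
    2 * S.card ≤ crossCut k A := by
  classical
  have hk0 : 0 < k := by omega
  unfold crossCut
  have hsub : S.biUnion (fun w => {(w, w * Equiv.swap (posm k) (Fin.last k)),
      (w, w * Equiv.swap (pos0 k) (Fin.last k))}) ⊆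
      (Finset.univ.filter fun p : Equiv.Perm (Fin (k + 1)) × Equiv.Perm (Fin (k + 1)) =>
        (p.1 ∈ A ∧ p.2 ∉ A ∧ (BS (k + 1)).Adj p.1 p.2) ∧
        p.1 (Fin.last k) ≠ p.2 (Fin.last k)) := by
    intro p hp
    simp only [Finset.mem_biUnion, Finset.mem_insert, Finset.mem_singleton] at hp
    obtain ⟨w, hw, hp | hp⟩ := hp <;> subst hp <;>
      simp only [Finset.mem_filter, Finset.mem_univ, true_and]
    · exact ⟨⟨(hS w hw).1, (hS w hw).2.1, adj_nbrm hk0 w⟩,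
        by rw [val_nbrm]; exact (val_nbrm_ne hk0 w).symm⟩
    · exact ⟨⟨(hS w hw).1, (hS w hw).2.2, adj_nbr0 hk0 w⟩,
        by rw [val_nbr0]; exact (val_nbr0_ne hk0 w).symm⟩
  have hdisj : ∀ w ∈ S, ∀ w' ∈ S, w ≠ w' →
      Disjoint ({(w, w * Equiv.swap (posm k) (Fin.last k)),
        (w, w * Equiv.swap (pos0 k) (Fin.last k))} :
          Finset (Equiv.Perm (Fin (k + 1)) × Equiv.Perm (Fin (k + 1))))
        {(w', w' * Equiv.swap (posm k) (Fin.last k)),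
         (w', w' * Equiv.swap (pos0 k) (Fin.last k))} := by
    intro w _ w' _ hww
    rw [Finset.disjoint_left]
    intro p hp hp'
    simp only [Finset.mem_insert, Finset.mem_singleton] at hp hp'
    have e1 : p.1 = w := by rcases hp with h | h <;> rw [h]
    have e2 : p.1 = w' := by rcases hp' with h | h <;> rw [h]
    exact hww (e1.symm.trans e2)
  calc 2 * S.card = ∑ w ∈ S, 2 := by rw [Finset.sum_const, smul_eq_mul, mul_comm]
    _ = ∑ w ∈ S, ({(w, w * Equiv.swap (posm k) (Fin.last k)),
        (w, w * Equiv.swap (pos0 k) (Fin.last k))} :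
          Finset (Equiv.Perm (Fin (k + 1)) × Equiv.Perm (Fin (k + 1)))).card := by
        apply Finset.sum_congr rfl
        intro w _
        rw [Finset.card_insert_of_notMem, Finset.card_singleton]
        simp only [Finset.mem_singleton]
        intro h
        exact nbrm_ne_nbr0 hk w (congrArg Prod.snd h)
    _ = (S.biUnion _).card := (Finset.card_biUnion hdisj).symm
    _ ≤ _ := Finset.card_le_card hsub

lemma crossCut_ge_two' {k : ℕ} (hk : 2 ≤ k) (A S : Finset (Equiv.Perm (Fin (k + 1))))
    (hS : ∀ w ∈ S, w ∉ A ∧ w * Equiv.swap (posm k) (Fin.last k) ∈ A ∧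
      w * Equiv.swap (pos0 k) (Fin.last k) ∈ A) :
    2 * S.card ≤ crossCut k A := by
  classical
  have hk0 : 0 < k := by omega
  unfold crossCut
  have hsub : S.biUnion (fun w => {(w * Equiv.swap (posm k) (Fin.last k), w),
      (w * Equiv.swap (pos0 k) (Fin.last k), w)}) ⊆
      (Finset.univ.filter fun p : Equiv.Perm (Fin (k + 1)) × Equiv.Perm (Fin (k + 1)) =>
        (p.1 ∈ A ∧ p.2 ∉ A ∧ (BS (k + 1)).Adj p.1 p.2) ∧
        p.1 (Fin.last k) ≠ p.2 (Fin.last k)) := by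
    intro p hp
    simp only [Finset.mem_biUnion, Finset.mem_insert, Finset.mem_singleton] at hp
    obtain ⟨w, hw, hp | hp⟩ := hp <;> subst hp <;>
      simp only [Finset.mem_filter, Finset.mem_univ, true_and]
    · exact ⟨⟨(hS w hw).2.1, (hS w hw).1, ((BS (k + 1)).adj_comm _ _).1 (adj_nbrm hk0 w)⟩,
        by rw [val_nbrm]; exact val_nbrm_ne hk0 w⟩
    · exact ⟨⟨(hS w hw).2.2, (hS w hw).1, ((BS (k + 1)).adj_comm _ _).1 (adj_nbr0 hk0 w)⟩,
        by rw [val_nbr0]; exact val_nbr0_ne hk0 w⟩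
  have hdisj : ∀ w ∈ S, ∀ w' ∈ S, w ≠ w' →
      Disjoint ({(w * Equiv.swap (posm k) (Fin.last k), w),
        (w * Equiv.swap (pos0 k) (Fin.last k), w)} :
          Finset (Equiv.Perm (Fin (k + 1)) × Equiv.Perm (Fin (k + 1))))
        {(w' * Equiv.swap (posm k) (Fin.last k), w'),
         (w' * Equiv.swap (pos0 k) (Fin.last k), w')} := by
    intro w _ w' _ hww
    rw [Finset.disjoint_left]
    intro p hp hp'
    simp only [Finset.mem_insert, Finset.mem_singleton] at hp hp'
    have e1 : p.2 = w := by rcases hp with h | h <;> rw [h]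
    have e2 : p.2 = w' := by rcases hp' with h | h <;> rw [h]
    exact hww (e1.symm.trans e2)
  calc 2 * S.card = ∑ w ∈ S, 2 := by rw [Finset.sum_const, smul_eq_mul, mul_comm]
    _ = ∑ w ∈ S, ({(w * Equiv.swap (posm k) (Fin.last k), w),
        (w * Equiv.swap (pos0 k) (Fin.last k), w)} :
          Finset (Equiv.Perm (Fin (k + 1)) × Equiv.Perm (Fin (k + 1)))).card := by
        apply Finset.sum_congr rfl
        intro w _
        rw [Finset.card_insert_of_notMem, Finset.card_singleton]
        simp only [Finset.mem_singleton]
        intro h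
        exact nbrm_ne_nbr0 hk w (congrArg Prod.fst h)
    _ = (S.biUnion _).card := (Finset.card_biUnion hdisj).symm
    _ ≤ _ := Finset.card_le_card hsub

end BSAux
namespace BSAux

open Finset Equiv

lemma apply_mul_swap_of_ne {N : ℕ} (x : Equiv.Perm (Fin N)) {a b p : Fin N}
    (hpa : p ≠ a) (hpb : p ≠ b) : (x * Equiv.swap a b) p = x p := by
  rw [Equiv.Perm.mul_apply, Equiv.swap_apply_of_ne_of_ne hpa hpb]

lemma four_edges {k : ℕ} (hk : 3 ≤ k) {f e : Fin (k + 1)} (hfe : f ≠ e) :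
    ∃ T : Finset (Equiv.Perm (Fin (k + 1)) × Equiv.Perm (Fin (k + 1))),
      T.card = 4 ∧ ∀ p ∈ T, (BS (k + 1)).Adj p.1 p.2 ∧
        p.1 (Fin.last k) = f ∧ p.2 (Fin.last k) = e := by
  classical
  have hk0 : 0 < k := by omega
  have hk2 : 2 ≤ k := by omega
  have hlm : Fin.last k ≠ posm k := (posm_ne_last hk0).symm
  have hl0 : Fin.last k ≠ pos0 k := (pos0_ne_last hk0).symm
  obtain ⟨x1, hx1l, hx1m⟩ := perm_with2 hlm hfe
  obtain ⟨x3, hx3l, hx30⟩ := perm_with2 hl0 hfe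
  have hq1 : (0 : ℕ) < k + 1 := by omega
  have hq2 : (1 : ℕ) < k + 1 := by omega
  have hq3 : (2 : ℕ) < k + 1 := by omega
  set q1 : Fin (k + 1) := ⟨0, hq1⟩ with hq1d
  set q2 : Fin (k + 1) := ⟨1, hq2⟩ with hq2d
  set q3 : Fin (k + 1) := ⟨2, hq3⟩ with hq3d
  have hq12 : q1 ≠ q2 := by intro h; exact absurd (congrArg Fin.val h) (by simp [hq1d, hq2d])
  have hq23 : q2 ≠ q3 := by intro h; exact absurd (congrArg Fin.val h) (by simp [hq2d, hq3d])
  set x2 := x1 * Equiv.swap q1 q2 with hx2d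
  set x4 := x3 * Equiv.swap q2 q3 with hx4d
  have hlast_q1 : Fin.last k ≠ q1 := by
    intro h; exact absurd (congrArg Fin.val h) (by simp [hq1d, Fin.val_last]; omega)
  have hlast_q2 : Fin.last k ≠ q2 := by
    intro h; exact absurd (congrArg Fin.val h) (by simp [hq2d, Fin.val_last]; omega)
  have hlast_q3 : Fin.last k ≠ q3 := by
    intro h; exact absurd (congrArg Fin.val h) (by simp [hq3d, Fin.val_last]; omega)
  have hposm_q1 : posm k ≠ q1 := by
    intro h; have := congrArg Fin.val h; unfold posm at this; simp [hq1d] at this; omega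
  have hposm_q2 : posm k ≠ q2 := by
    intro h; have := congrArg Fin.val h; unfold posm at this; simp [hq2d] at this; omega
  have hpos0_q2 : pos0 k ≠ q2 := by
    intro h; have := congrArg Fin.val h; unfold pos0 at this; simp [hq2d] at this
  have hpos0_q3 : pos0 k ≠ q3 := by
    intro h; have := congrArg Fin.val h; unfold pos0 at this; simp [hq3d] at this
  have hx2l : x2 (Fin.last k) = f := by
    rw [hx2d, apply_mul_swap_of_ne x1 hlast_q1 hlast_q2, hx1l]
  have hx2m : x2 (posm k) = e := by
    rw [hx2d, apply_mul_swap_of_ne x1 hposm_q1 hposm_q2, hx1m]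
  have hx4l : x4 (Fin.last k) = f := by
    rw [hx4d, apply_mul_swap_of_ne x3 hlast_q2 hlast_q3, hx3l]
  have hx40 : x4 (pos0 k) = e := by
    rw [hx4d, apply_mul_swap_of_ne x3 hpos0_q2 hpos0_q3, hx30]
  -- distinctness of the four first coordinates
  have hne_m0 : ∀ y : Equiv.Perm (Fin (k + 1)), y (posm k) = e → y (pos0 k) = e → False := by
    intro y h1 h2
    exact posm_ne_pos0 hk2 (y.injective (h1.trans h2.symm))
  have h12 : x1 ≠ x2 := (swap_ne_self x1 hq12).symm
  have h34 : x3 ≠ x4 := (swap_ne_self x3 hq23).symm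
  have h13 : x1 ≠ x3 := fun h => hne_m0 x1 hx1m (by rw [h]; exact hx30)
  have h14 : x1 ≠ x4 := fun h => hne_m0 x1 hx1m (by rw [h]; exact hx40)
  have h23 : x2 ≠ x3 := fun h => hne_m0 x2 hx2m (by rw [h]; exact hx30)
  have h24 : x2 ≠ x4 := fun h => hne_m0 x2 hx2m (by rw [h]; exact hx40)
  set P1 : Equiv.Perm (Fin (k + 1)) × Equiv.Perm (Fin (k + 1)) :=
    (x1, x1 * Equiv.swap (posm k) (Fin.last k)) with hP1
  set P2 : Equiv.Perm (Fin (k + 1)) × Equiv.Perm (Fin (k + 1)) :=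
    (x2, x2 * Equiv.swap (posm k) (Fin.last k)) with hP2
  set P3 : Equiv.Perm (Fin (k + 1)) × Equiv.Perm (Fin (k + 1)) :=
    (x3, x3 * Equiv.swap (pos0 k) (Fin.last k)) with hP3
  set P4 : Equiv.Perm (Fin (k + 1)) × Equiv.Perm (Fin (k + 1)) :=
    (x4, x4 * Equiv.swap (pos0 k) (Fin.last k)) with hP4
  have hfst : P1.1 = x1 ∧ P2.1 = x2 ∧ P3.1 = x3 ∧ P4.1 = x4 := ⟨rfl, rfl, rfl, rfl⟩
  refine ⟨{P1, P2, P3, P4}, ?_, ?_⟩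
  · rw [Finset.card_insert_of_notMem, Finset.card_insert_of_notMem,
      Finset.card_insert_of_notMem, Finset.card_singleton]
    · simp only [Finset.mem_singleton]
      intro h
      exact h34 (congrArg Prod.fst h)
    · simp only [Finset.mem_insert, Finset.mem_singleton]
      push_neg
      exact ⟨fun h => h23 (congrArg Prod.fst h), fun h => h24 (congrArg Prod.fst h)⟩
    · simp only [Finset.mem_insert, Finset.mem_singleton]
      push_neg
      exact ⟨fun h => h12 (congrArg Prod.fst h), fun h => h13 (congrArg Prod.fst h),
        fun h => h14 (congrArg Prod.fst h)⟩
  · intro p hp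
    simp only [Finset.mem_insert, Finset.mem_singleton] at hp
    rcases hp with rfl | rfl | rfl | rfl
    · exact ⟨adj_nbrm hk0 x1, hx1l, by rw [val_nbrm]; exact hx1m⟩
    · exact ⟨adj_nbrm hk0 x2, hx2l, by rw [val_nbrm]; exact hx2m⟩
    · exact ⟨adj_nbr0 hk0 x3, hx3l, by rw [val_nbr0]; exact hx30⟩
    · exact ⟨adj_nbr0 hk0 x4, hx4l, by rw [val_nbr0]; exact hx40⟩

lemma crossCut_fullempty {k : ℕ} (hk : 3 ≤ k) (A : Finset (Equiv.Perm (Fin (k + 1))))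
    (Fu Em : Finset (Fin (k + 1)))
    (hFu : ∀ i ∈ Fu, ∀ x : Equiv.Perm (Fin (k + 1)), x (Fin.last k) = i → x ∈ A)
    (hEm : ∀ i ∈ Em, ∀ x : Equiv.Perm (Fin (k + 1)), x (Fin.last k) = i → x ∉ A) :
    4 * (Fu.card * Em.card) ≤ crossCut k A := by
  classical
  have hfe : ∀ q ∈ Fu ×ˢ Em, q.1 ≠ q.2 := by
    rintro ⟨qf, qe⟩ hq h
    simp only [Finset.mem_product] at hq
    have hx : (Equiv.swap (Fin.last k) qf : Equiv.Perm (Fin (k + 1))) (Fin.last k) = qf :=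
      Equiv.swap_apply_left _ _
    have h1 := hFu qf hq.1 _ hx
    have h' : qf = qe := h
    rw [h'] at h1 hx
    exact hEm qe hq.2 _ hx h1
  set Tq : Fin (k + 1) × Fin (k + 1) →
      Finset (Equiv.Perm (Fin (k + 1)) × Equiv.Perm (Fin (k + 1))) := fun q =>
    if h : q.1 ≠ q.2 then (four_edges hk h).choose else ∅ with hTqd
  have hTspec : ∀ q ∈ Fu ×ˢ Em, (Tq q).card = 4 ∧ ∀ p ∈ Tq q,
      (BS (k + 1)).Adj p.1 p.2 ∧ p.1 (Fin.last k) = q.1 ∧ p.2 (Fin.last k) = q.2 := by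
    intro q hq
    rw [hTqd]
    simp only
    rw [dif_pos (hfe q hq)]
    exact (four_edges hk (hfe q hq)).choose_spec
  have hsub : (Fu ×ˢ Em).biUnion Tq ⊆
      (Finset.univ.filter fun p : Equiv.Perm (Fin (k + 1)) × Equiv.Perm (Fin (k + 1)) =>
        (p.1 ∈ A ∧ p.2 ∉ A ∧ (BS (k + 1)).Adj p.1 p.2) ∧
        p.1 (Fin.last k) ≠ p.2 (Fin.last k)) := by
    intro p hp
    simp only [Finset.mem_biUnion] at hp
    obtain ⟨q, hq, hpq⟩ := hp
    obtain ⟨-, hprop⟩ := hTspec q hq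
    obtain ⟨hadj, hv1, hv2⟩ := hprop p hpq
    have hqm := Finset.mem_product.1 hq
    simp only [Finset.mem_filter, Finset.mem_univ, true_and]
    refine ⟨⟨hFu q.1 hqm.1 p.1 hv1, hEm q.2 hqm.2 p.2 hv2, hadj⟩, ?_⟩
    rw [hv1, hv2]
    exact hfe q hq
  have hdisj : ∀ q ∈ Fu ×ˢ Em, ∀ q' ∈ Fu ×ˢ Em, q ≠ q' → Disjoint (Tq q) (Tq q') := by
    intro q hq q' hq' hne
    rw [Finset.disjoint_left]
    intro p hp hp'
    obtain ⟨-, hprop⟩ := hTspec q hq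
    obtain ⟨-, hprop'⟩ := hTspec q' hq'
    obtain ⟨-, hv1, hv2⟩ := hprop p hp
    obtain ⟨-, hv1', hv2'⟩ := hprop' p hp'
    exact hne (Prod.ext (hv1.symm.trans hv1') (hv2.symm.trans hv2'))
  calc 4 * (Fu.card * Em.card) = ∑ _q ∈ Fu ×ˢ Em, 4 := by
        rw [Finset.sum_const, smul_eq_mul, Finset.card_product, mul_comm]
    _ = ∑ q ∈ Fu ×ˢ Em, (Tq q).card := by
        apply Finset.sum_congr rfl
        intro q hq
        exact ((hTspec q hq).1).symm
    _ = ((Fu ×ˢ Em).biUnion Tq).card := (Finset.card_biUnion hdisj).symm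
    _ ≤ _ := Finset.card_le_card hsub

lemma mul_ge_add_sub_one {p q : ℕ} (hp : 1 ≤ p) (hq : 1 ≤ q) : p + q - 1 ≤ p * q := by
  rcases p with _ | p'
  · omega
  rcases q with _ | q'
  · omega
  have he : (p' + 1) * (q' + 1) = p' * q' + (p' + q' + 1) := by ring
  rw [he]
  have h2 : p' + 1 + (q' + 1) - 1 = p' + q' + 1 := by omega
  rw [h2]
  exact Nat.le_add_left _ _

lemma fact_ge_succ : ∀ N : ℕ, 3 ≤ N → N + 1 ≤ N.factorial := by
  intro N
  induction N with
  | zero => intro h; omega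
  | succ m ih =>
    intro h
    by_cases hm : 3 ≤ m
    · have h1 := ih hm
      rw [Nat.factorial_succ]
      have h2 : 2 * m.factorial ≤ (m + 1) * m.factorial :=
        Nat.mul_le_mul_right _ (by omega)
      have h3 : 2 * (m + 1) ≤ 2 * m.factorial := Nat.mul_le_mul_left _ h1
      omega
    · have hm3 : m = 2 := by omega
      subst hm3
      norm_num [Nat.factorial]

end BSAux
namespace BSAux

open Finset Equiv

lemma cut3 {n : ℕ} (hn : 3 ≤ n) (A : Finset (Equiv.Perm (Fin n))) (hA : A.card = 3) :
    3 * (2 * n - 3) ≤ cutP (BS n) A + 4 := by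
  classical
  obtain ⟨x, y, z, hxy, hxz, hyz, rfl⟩ := Finset.card_eq_three.1 hA
  by_cases h1 : (BS n).Adj y z
  · by_cases h2 : (BS n).Adj x z
    · by_cases h3 : (BS n).Adj x y
      · exact absurd h1 (fun hc => no_triangle h3 hc h2)
      · have hset : ({x, y, z} : Finset (Equiv.Perm (Fin n))) = {z, x, y} := by
          ext w
          simp only [Finset.mem_insert, Finset.mem_singleton]
          tauto
        rw [hset]
        exact cut3_aux hn (Ne.symm hxz) (Ne.symm hyz) hxy h3
    · have hset : ({x, y, z} : Finset (Equiv.Perm (Fin n))) = {y, x, z} := by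
        ext w
        simp only [Finset.mem_insert, Finset.mem_singleton]
        tauto
      rw [hset]
      exact cut3_aux hn (Ne.symm hxy) hyz hxz h2
  · exact cut3_aux hn hxy hxz hyz h1

lemma iso_step (k : ℕ) (hk : 3 ≤ k)
    (IH : ∀ B : Finset (Equiv.Perm (Fin k)), 3 ≤ B.card → 3 ≤ Bᶜ.card →
      4 * k - 8 ≤ cutP (BS k) B) :
    ∀ A : Finset (Equiv.Perm (Fin (k + 1))), 3 ≤ A.card → 3 ≤ Aᶜ.card →
      4 * (k + 1) - 8 ≤ cutP (BS (k + 1)) A := by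
  classical
  intro A hA hAc
  have hk0 : 0 < k := by omega
  have hk2 : 2 ≤ k := by omega
  have hm6 : 6 ≤ k.factorial := by
    calc 6 = Nat.factorial 3 := by norm_num [Nat.factorial]
      _ ≤ k.factorial := Nat.factorial_le hk
  have hmk : k + 1 ≤ k.factorial := fact_ge_succ k hk
  set Mix : Finset (Fin (k + 1)) :=
    Finset.univ.filter (fun i => 0 < aF k A i ∧ aF k A i < k.factorial) with hMixd
  set Fu : Finset (Fin (k + 1)) :=
    Finset.univ.filter (fun i => aF k A i = k.factorial) with hFud
  set Em : Finset (Fin (k + 1)) :=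
    Finset.univ.filter (fun i => aF k A i = 0) with hEmd
  have htri : ∀ i, i ∈ Mix ∨ i ∈ Fu ∨ i ∈ Em := by
    intro i
    have h1 := aF_le A i
    rw [hMixd, hFud, hEmd]
    simp only [Finset.mem_filter, Finset.mem_univ, true_and]
    omega
  have hMix_mem : ∀ i ∈ Mix, 0 < aF k A i ∧ aF k A i < k.factorial := by
    intro i hi
    rw [hMixd, Finset.mem_filter] at hi
    exact hi.2
  have hFu_mem : ∀ i ∈ Fu, ∀ x : Equiv.Perm (Fin (k + 1)), x (Fin.last k) = i → x ∈ A := by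
    intro i hi
    rw [hFud, Finset.mem_filter] at hi
    exact full_val_mem hi.2
  have hEm_mem : ∀ i ∈ Em, ∀ x : Equiv.Perm (Fin (k + 1)), x (Fin.last k) = i → x ∉ A := by
    intro i hi
    rw [hEmd, Finset.mem_filter] at hi
    exact empty_val_mem hi.2
  have hsame_small : ∀ i ∈ Mix, 2 * k - 3 ≤ sameCut k A i := by
    intro i hi
    have hi2 := hMix_mem i hi
    rw [sameCut_eq hk0]
    apply small_cut hk IH
    · rw [card_At]
      omega
    · rw [At_compl, card_At]
      have := aF_add_compl A i
      omega
  have hsame_mid : ∀ i, 2 ≤ aF k A i → aF k A i + 2 ≤ k.factorial →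
      4 * k - 8 ≤ sameCut k A i := by
    intro i h1 h2
    rw [sameCut_eq hk0]
    apply mid_cut hk IH
    · rw [card_At]
      omega
    · rw [At_compl, card_At]
      have := aF_add_compl A i
      omega
  have hcutsplit := cut_split A
  have hval_notfull : ∀ w ∈ Aᶜ, aF k A (w (Fin.last k)) < k.factorial := by
    intro w hw
    have h1 : 1 ≤ aF k Aᶜ (w (Fin.last k)) := by
      unfold aF
      rw [Nat.succ_le_iff, Finset.card_pos]
      exact ⟨w, Finset.mem_filter.2 ⟨hw, rfl⟩⟩
    have := aF_add_compl A (w (Fin.last k))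
    omega
  have hval_notempty : ∀ w ∈ A, 0 < aF k A (w (Fin.last k)) := by
    intro w hw
    unfold aF
    rw [Finset.card_pos]
    exact ⟨w, Finset.mem_filter.2 ⟨hw, rfl⟩⟩
  -- partition cardinalities
  have hdisjFE : Disjoint Fu Em := by
    rw [Finset.disjoint_left]
    intro i hi hi'
    rw [hFud, Finset.mem_filter] at hi
    rw [hEmd, Finset.mem_filter] at hi'
    omega
  have hMixcompl : Mix = (Fu ∪ Em)ᶜ := by
    ext i
    have h1 := aF_le A i
    rw [hMixd, hFud, hEmd]
    simp only [Finset.mem_compl, Finset.mem_union, Finset.mem_filter, Finset.mem_univ, true_and]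
    omega
  have hcardsum : Fu.card + Em.card + Mix.card = k + 1 := by
    rw [hMixcompl, Finset.card_compl, Finset.card_union_of_disjoint hdisjFE, Fintype.card_fin]
    have : (Fu ∪ Em).card ≤ k + 1 := by
      calc (Fu ∪ Em).card ≤ Finset.univ.card := Finset.card_le_card (Finset.subset_univ _)
        _ = k + 1 := by rw [Finset.card_univ, Fintype.card_fin]
    rw [Finset.card_union_of_disjoint hdisjFE] at this
    omega
  -- generic cross bounds
  have hcross_prod : 4 * (Fu.card * Em.card) ≤ crossCut k A :=
    crossCut_fullempty hk A Fu Em hFu_mem hEm_mem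
  -- case analysis on Mix.card
  rcases Nat.lt_or_ge Mix.card 3 with hMlt | hM3
  swap
  · -- at least three mixed copies
    obtain ⟨T, hTsub, hTcard⟩ := Finset.exists_subset_card_eq hM3
    have hsum : 3 * (2 * k - 3) ≤ ∑ i, sameCut k A i := by
      calc 3 * (2 * k - 3) = ∑ _i ∈ T, (2 * k - 3) := by
            rw [Finset.sum_const, smul_eq_mul, hTcard]
        _ ≤ ∑ i ∈ T, sameCut k A i := Finset.sum_le_sum (fun i hi => hsame_small i (hTsub hi))
        _ ≤ ∑ i, sameCut k A i :=
            Finset.sum_le_sum_of_subset (Finset.subset_univ T)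
    omega
  -- helper facts used in the remaining cases
  have hforall_notMix_full : (∀ i, aF k A i ≠ 0) → ∀ v, v ∉ Mix →
      ∀ x : Equiv.Perm (Fin (k + 1)), x (Fin.last k) = v → x ∈ A := by
    intro hEm0 v hv x hx
    rcases htri v with h | h | h
    · exact absurd h hv
    · exact hFu_mem v h x hx
    · exfalso
      rw [hEmd, Finset.mem_filter] at h
      exact hEm0 v h.2
  have hforall_notMix_empty : (∀ i, aF k A i ≠ k.factorial) → ∀ v, v ∉ Mix →
      ∀ x : Equiv.Perm (Fin (k + 1)), x (Fin.last k) = v → x ∉ A := by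
    intro hFu0 v hv x hx
    rcases htri v with h | h | h
    · exact absurd h hv
    · exfalso
      rw [hFud, Finset.mem_filter] at h
      exact hFu0 v h.2
    · exact hEm_mem v h x hx
  have hvalAc_mix : (∀ i, aF k A i ≠ 0) → ∀ w ∈ Aᶜ, w (Fin.last k) ∈ Mix := by
    intro hEm0 w hw
    have h1 := hval_notfull w hw
    have h2 := hEm0 (w (Fin.last k))
    rw [hMixd, Finset.mem_filter]
    exact ⟨Finset.mem_univ _, by omega, h1⟩
  have hvalA_mix : (∀ i, aF k A i ≠ k.factorial) → ∀ w ∈ A, w (Fin.last k) ∈ Mix := by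
    intro hFu0 w hw
    have h1 := hval_notempty w hw
    have h2 := hFu0 (w (Fin.last k))
    have h3 := aF_le A (w (Fin.last k))
    rw [hMixd, Finset.mem_filter]
    exact ⟨Finset.mem_univ _, h1, by omega⟩
  have hEm0_of : ¬Em.Nonempty → ∀ i, aF k A i ≠ 0 := by
    intro hEmN i h
    exact hEmN ⟨i, by rw [hEmd]; exact Finset.mem_filter.2 ⟨Finset.mem_univ _, h⟩⟩
  have hFu0_of : ¬Fu.Nonempty → ∀ i, aF k A i ≠ k.factorial := by
    intro hFuN i h
    exact hFuN ⟨i, by rw [hFud]; exact Finset.mem_filter.2 ⟨Finset.mem_univ _, h⟩⟩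
  rcases Nat.lt_or_ge Mix.card 1 with hM0 | hM1
  · -- no mixed copies
    have hFuN : Fu.Nonempty := by
      by_contra hFuN
      have hFu0 := hFu0_of hFuN
      have hzero : ∀ i, aF k A i = 0 := by
        intro i
        rcases htri i with h | h | h
        · exact absurd (Finset.card_pos.2 ⟨i, h⟩) (by omega)
        · rw [hFud, Finset.mem_filter] at h
          exact absurd h.2 (hFu0 i)
        · rw [hEmd, Finset.mem_filter] at h
          exact h.2
      have : A.card = 0 := by
        rw [← sum_aF A]
        exact Finset.sum_eq_zero (fun i _ => hzero i)
      omega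
    have hEmN : Em.Nonempty := by
      by_contra hEmN
      have hEm0 := hEm0_of hEmN
      have hfull : ∀ i, aF k A i = k.factorial := by
        intro i
        rcases htri i with h | h | h
        · exact absurd (Finset.card_pos.2 ⟨i, h⟩) (by omega)
        · rw [hFud, Finset.mem_filter] at h
          exact h.2
        · rw [hEmd, Finset.mem_filter] at h
          exact absurd h.2 (hEm0 i)
      have hAc0 : Aᶜ.card = 0 := by
        rw [← sum_aF Aᶜ]
        apply Finset.sum_eq_zero
        intro i _
        have := aF_add_compl A i
        have := hfull i
        omega
      omega
    have hp : 1 ≤ Fu.card := Finset.card_pos.2 hFuN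
    have hq : 1 ≤ Em.card := Finset.card_pos.2 hEmN
    have hprod := mul_ge_add_sub_one hp hq
    have h4 : 4 * (Fu.card + Em.card - 1) ≤ 4 * (Fu.card * Em.card) :=
      Nat.mul_le_mul_left 4 hprod
    have h5 : 4 * (Fu.card + Em.card - 1) ≤ crossCut k A := le_trans h4 hcross_prod
    omega
  rcases Nat.lt_or_ge Mix.card 2 with hM1' | hM2
  · -- exactly one mixed copy
    have hM1e : Mix.card = 1 := by omega
    obtain ⟨i0, hMixeq⟩ := Finset.card_eq_one.1 hM1e
    have hi0Mix : i0 ∈ Mix := by rw [hMixeq]; exact Finset.mem_singleton_self i0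
    have hi0 := hMix_mem i0 hi0Mix
    have hsame_i0 : sameCut k A i0 ≤ ∑ i, sameCut k A i :=
      Finset.single_le_sum (fun i _ => Nat.zero_le _) (Finset.mem_univ i0)
    by_cases hmid : 2 ≤ aF k A i0 ∧ aF k A i0 + 2 ≤ k.factorial
    · have hS := hsame_mid i0 hmid.1 hmid.2
      -- crossCut ≥ 4
      by_cases hEmN : Em.Nonempty
      · by_cases hFuN : Fu.Nonempty
        · have hp : 1 ≤ Fu.card := Finset.card_pos.2 hFuN
          have hq : 1 ≤ Em.card := Finset.card_pos.2 hEmN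
          have hprod := mul_ge_add_sub_one hp hq
          have h4 : 4 * (Fu.card + Em.card - 1) ≤ 4 * (Fu.card * Em.card) :=
            Nat.mul_le_mul_left 4 hprod
          have h5 : 4 * (Fu.card + Em.card - 1) ≤ crossCut k A := le_trans h4 hcross_prod
          omega
        · -- no full copies: A is inside copy i0, use two cross arcs per vertex of A
          have hFu0 := hFu0_of hFuN
          have hcr : 2 * A.card ≤ crossCut k A := by
            apply crossCut_ge_two hk2
            intro w hw
            have hvw : w (Fin.last k) ∈ Mix := hvalA_mix hFu0 w hw
            rw [hMixeq, Finset.mem_singleton] at hvw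
            refine ⟨hw, ?_, ?_⟩
            · apply hforall_notMix_empty hFu0 (w (posm k)) ?_ _ (val_nbrm w)
              rw [hMixeq, Finset.mem_singleton]
              intro h
              exact val_nbrm_ne hk0 w (h.trans hvw.symm ▸ rfl) 
            · apply hforall_notMix_empty hFu0 (w (pos0 k)) ?_ _ (val_nbr0 w)
              rw [hMixeq, Finset.mem_singleton]
              intro h
              exact val_nbr0_ne hk0 w (h.trans hvw.symm ▸ rfl)
          omega
      · -- no empty copies: A^c is inside copy i0
        have hEm0 := hEm0_of hEmN
        have hcr : 2 * Aᶜ.card ≤ crossCut k A := by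
          apply crossCut_ge_two' hk2
          intro w hw
          have hvw : w (Fin.last k) ∈ Mix := hvalAc_mix hEm0 w hw
          rw [hMixeq, Finset.mem_singleton] at hvw
          refine ⟨Finset.mem_compl.1 hw, ?_, ?_⟩
          · apply hforall_notMix_full hEm0 (w (posm k)) ?_ _ (val_nbrm w)
            rw [hMixeq, Finset.mem_singleton]
            intro h
            exact val_nbrm_ne hk0 w (h.trans hvw.symm ▸ rfl)
          · apply hforall_notMix_full hEm0 (w (pos0 k)) ?_ _ (val_nbr0 w)
            rw [hMixeq, Finset.mem_singleton]
            intro h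
            exact val_nbr0_ne hk0 w (h.trans hvw.symm ▸ rfl)
        omega
    · -- extreme mixed copy : aF i0 = 1 or aF i0 = k! - 1
      have hS := hsame_small i0 hi0Mix
      have hext : aF k A i0 = 1 ∨ aF k A i0 + 1 = k.factorial := by omega
      by_cases hEmN : Em.Nonempty
      · by_cases hFuN : Fu.Nonempty
        · have hp : 1 ≤ Fu.card := Finset.card_pos.2 hFuN
          have hq : 1 ≤ Em.card := Finset.card_pos.2 hEmN
          have hpq : Fu.card + Em.card = k := by omega
          have hprod := mul_ge_add_sub_one hp hq
          have h4 : 4 * (Fu.card + Em.card - 1) ≤ 4 * (Fu.card * Em.card) :=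
            Nat.mul_le_mul_left 4 hprod
          have h5 : 4 * (Fu.card + Em.card - 1) ≤ crossCut k A := le_trans h4 hcross_prod
          omega
        · -- no full copies, so A ⊆ copy i0 and |A| = aF i0
          have hFu0 := hFu0_of hFuN
          have hAcard : A.card = aF k A i0 := by
            rw [← sum_aF A]
            rw [Finset.sum_eq_single_of_mem i0 (Finset.mem_univ _)]
            intro j _ hj
            rcases htri j with h | h | h
            · rw [hMixeq, Finset.mem_singleton] at h
              exact absurd h hj
            · rw [hFud, Finset.mem_filter] at h
              exact absurd h.2 (hFu0 j)
            · rw [hEmd, Finset.mem_filter] at h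
              exact h.2
          have hcr : 2 * A.card ≤ crossCut k A := by
            apply crossCut_ge_two hk2
            intro w hw
            have hvw : w (Fin.last k) ∈ Mix := hvalA_mix hFu0 w hw
            rw [hMixeq, Finset.mem_singleton] at hvw
            refine ⟨hw, ?_, ?_⟩
            · apply hforall_notMix_empty hFu0 (w (posm k)) ?_ _ (val_nbrm w)
              rw [hMixeq, Finset.mem_singleton]
              intro h
              exact val_nbrm_ne hk0 w (h.trans hvw.symm ▸ rfl)
            · apply hforall_notMix_empty hFu0 (w (pos0 k)) ?_ _ (val_nbr0 w)
              rw [hMixeq, Finset.mem_singleton]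
              intro h
              exact val_nbr0_ne hk0 w (h.trans hvw.symm ▸ rfl)
          omega
      · -- no empty copies, so A^c ⊆ copy i0 and |A^c| = k! - aF i0
        have hEm0 := hEm0_of hEmN
        have hAccard : Aᶜ.card = k.factorial - aF k A i0 := by
          rw [← sum_aF Aᶜ]
          rw [Finset.sum_eq_single_of_mem i0 (Finset.mem_univ _)]
          · have := aF_add_compl A i0
            omega
          · intro j _ hj
            have hj2 : aF k A j = k.factorial := by
              rcases htri j with h | h | h
              · rw [hMixeq, Finset.mem_singleton] at h
                exact absurd h hj
              · rw [hFud, Finset.mem_filter] at h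
                exact h.2
              · rw [hEmd, Finset.mem_filter] at h
                exact absurd h.2 (hEm0 j)
            have := aF_add_compl A j
            omega
        have hcr : 2 * Aᶜ.card ≤ crossCut k A := by
          apply crossCut_ge_two' hk2
          intro w hw
          have hvw : w (Fin.last k) ∈ Mix := hvalAc_mix hEm0 w hw
          rw [hMixeq, Finset.mem_singleton] at hvw
          refine ⟨Finset.mem_compl.1 hw, ?_, ?_⟩
          · apply hforall_notMix_full hEm0 (w (posm k)) ?_ _ (val_nbrm w)
            rw [hMixeq, Finset.mem_singleton]
            intro h
            exact val_nbrm_ne hk0 w (h.trans hvw.symm ▸ rfl)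
          · apply hforall_notMix_full hEm0 (w (pos0 k)) ?_ _ (val_nbr0 w)
            rw [hMixeq, Finset.mem_singleton]
            intro h
            exact val_nbr0_ne hk0 w (h.trans hvw.symm ▸ rfl)
        omega
  · -- exactly two mixed copies
    have hM2e : Mix.card = 2 := by omega
    obtain ⟨i1, i2, hi12, hMixeq⟩ := Finset.card_eq_two.1 hM2e
    have hsum2 : 2 * (2 * k - 3) ≤ ∑ i, sameCut k A i := by
      calc 2 * (2 * k - 3) = ∑ _i ∈ Mix, (2 * k - 3) := by
            rw [Finset.sum_const, smul_eq_mul, hM2e]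
        _ ≤ ∑ i ∈ Mix, sameCut k A i := Finset.sum_le_sum (fun i hi => hsame_small i hi)
        _ ≤ ∑ i, sameCut k A i := Finset.sum_le_sum_of_subset (Finset.subset_univ Mix)
    -- crossCut ≥ 2
    have hcr2 : 2 ≤ crossCut k A := by
      by_cases hEmN : Em.Nonempty
      · by_cases hFuN : Fu.Nonempty
        · have hp : 1 ≤ Fu.card := Finset.card_pos.2 hFuN
          have hq : 1 ≤ Em.card := Finset.card_pos.2 hEmN
          have hprod := mul_ge_add_sub_one hp hq
          have h4 : 4 * (Fu.card + Em.card - 1) ≤ 4 * (Fu.card * Em.card) :=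
            Nat.mul_le_mul_left 4 hprod
          have h5 : 4 * (Fu.card + Em.card - 1) ≤ crossCut k A := le_trans h4 hcross_prod
          omega
        · -- no full copies: every vertex of A has a cross neighbour outside A
          have hFu0 := hFu0_of hFuN
          have hcr : A.card ≤ crossCut k A := by
            apply crossCut_ge_sub
            intro w hw
            have hvw : w (Fin.last k) ∈ Mix := hvalA_mix hFu0 w hw
            refine ⟨hw, ?_⟩
            by_cases hv1 : w (posm k) ∈ Mix
            · -- then the pos0 neighbour leaves Mix
              have hv2 : w (pos0 k) ∉ Mix := by
                intro hv2
                rw [hMixeq, Finset.mem_insert, Finset.mem_singleton] at hvw hv1 hv2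
                have e1 := val_nbrm_ne hk0 w
                have e2 := val_nbr0_ne hk0 w
                have e3 := val_nbrm_ne_nbr0 hk2 w
                rcases hvw with h | h <;> rcases hv1 with h' | h' <;>
                    rcases hv2 with h'' | h'' <;>
                  first
                  | exact e1 (h'.trans h.symm)
                  | exact e2 (h''.trans h.symm)
                  | exact e3 (h'.trans h''.symm)
            
              refine ⟨w * Equiv.swap (pos0 k) (Fin.last k), adj_nbr0 hk0 w, ?_, ?_⟩
              · exact hforall_notMix_empty hFu0 _ hv2 _ (val_nbr0 w)
              · rw [val_nbr0]
                exact (val_nbr0_ne hk0 w).symm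
            · refine ⟨w * Equiv.swap (posm k) (Fin.last k), adj_nbrm hk0 w, ?_, ?_⟩
              · exact hforall_notMix_empty hFu0 _ hv1 _ (val_nbrm w)
              · rw [val_nbrm]
                exact (val_nbrm_ne hk0 w).symm
          omega
      · -- no empty copies: every vertex of A^c has a cross neighbour inside A
        have hEm0 := hEm0_of hEmN
        have hcr : Aᶜ.card ≤ crossCut k A := by
          apply crossCut_ge_sub'
          intro w hw
          have hvw : w (Fin.last k) ∈ Mix := hvalAc_mix hEm0 w hw
          refine ⟨Finset.mem_compl.1 hw, ?_⟩
          by_cases hv1 : w (posm k) ∈ Mix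
          · have hv2 : w (pos0 k) ∉ Mix := by
              intro hv2
              rw [hMixeq, Finset.mem_insert, Finset.mem_singleton] at hvw hv1 hv2
              have e1 := val_nbrm_ne hk0 w
              have e2 := val_nbr0_ne hk0 w
              have e3 := val_nbrm_ne_nbr0 hk2 w
              rcases hvw with h | h <;> rcases hv1 with h' | h' <;>
                  rcases hv2 with h'' | h'' <;>
                first
                | exact e1 (h'.trans h.symm)
                | exact e2 (h''.trans h.symm)
                | exact e3 (h'.trans h''.symm)
            refine ⟨w * Equiv.swap (pos0 k) (Fin.last k),
              ((BS (k + 1)).adj_comm _ _).1 (adj_nbr0 hk0 w), ?_, ?_⟩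
            · exact hforall_notMix_full hEm0 _ hv2 _ (val_nbr0 w)
            · rw [val_nbr0]
              exact val_nbr0_ne hk0 w
          · refine ⟨w * Equiv.swap (posm k) (Fin.last k),
              ((BS (k + 1)).adj_comm _ _).1 (adj_nbrm hk0 w), ?_, ?_⟩
            · exact hforall_notMix_full hEm0 _ hv1 _ (val_nbrm w)
            · rw [val_nbrm]
              exact val_nbrm_ne hk0 w
        omega
    omega

end BSAux
/-- The key isoperimetric bound: any vertex set in `BS n` with at least `3` vertices on
each side has edge boundary at least `4n - 8`. -/
theorem BSAux.iso_bound : ∀ (n : ℕ), 3 ≤ n → ∀ A : Finset (Equiv.Perm (Fin n)),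
    3 ≤ A.card → 3 ≤ Aᶜ.card → 4 * n - 8 ≤ BSAux.cutP (BS n) A := by
  intro n
  induction n with
  | zero => intro h; omega
  | succ k ihk =>
    intro hn A hA hAc
    by_cases hk3 : 3 ≤ k
    · exact BSAux.iso_step k hk3 (fun B h1 h2 => ihk hk3 B h1 h2) A hA hAc
    · have hk2 : k = 2 := by omega
      subst hk2
      have hcard6 : Fintype.card (Equiv.Perm (Fin (2 + 1))) = 6 := by
        rw [Fintype.card_perm, Fintype.card_fin]
        norm_num [Nat.factorial]
      have hcompl := Finset.card_compl A
      rw [hcard6] at hcompl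
      have hA3 : A.card = 3 := by omega
      have h9 := BSAux.cut3 (by norm_num) A hA3
      omega


/-- For `n ≥ 3`, `BS_n` is `(2n-5)`-edge-fault-tolerant strongly Menger edge connected:
after deleting any set of at most `2n - 5` edges, any two distinct vertices `u, v` are
joined by `min{d(u), d(v)}` pairwise edge-disjoint paths. -/
theorem BS_fault_tolerant_Menger (n : ℕ) (hn : 3 ≤ n)
    (F : Set (Sym2 (Equiv.Perm (Fin n)))) (hF : F ⊆ (BS n).edgeSet)
    (hcard : F.ncard ≤ 2 * n - 5) (u v : Equiv.Perm (Fin n)) (huv : u ≠ v) :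
    HasEdgeDisjointPaths ((BS n).deleteEdges F) u v
      (min (deg ((BS n).deleteEdges F) u) (deg ((BS n).deleteEdges F) v)) := by
  classical
  apply BSAux.menger huv
  intro A huA hvA
  have hFfin : F.Finite := Set.toFinite F
  have hFF : ∀ e, e ∈ F ↔ e ∈ hFfin.toFinset := fun e => (Set.Finite.mem_toFinset hFfin).symm
  have hFcard : hFfin.toFinset.card ≤ 2 * n - 5 := by
    rw [← Set.ncard_coe_finset, Set.Finite.coe_toFinset]
    exact hcard
  have hdu : deg ((BS n).deleteEdges F) u ≤ deg (BS n) u := BSAux.deg_deleteEdges_le _ _ _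
  have hdeg_u : deg (BS n) u = 2 * n - 3 := BSAux.deg_BS hn u
  have hmin_u : min (deg ((BS n).deleteEdges F) u) (deg ((BS n).deleteEdges F) v) ≤
      deg ((BS n).deleteEdges F) u := min_le_left _ _
  have hmin_v : min (deg ((BS n).deleteEdges F) u) (deg ((BS n).deleteEdges F) v) ≤
      deg ((BS n).deleteEdges F) v := min_le_right _ _
  rcases Nat.lt_or_ge A.card 3 with hA3 | hA3
  · have hApos : 0 < A.card := Finset.card_pos.2 ⟨u, huA⟩
    rcases (by omega : A.card = 1 ∨ A.card = 2) with h1 | h2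
    · obtain ⟨a, ha⟩ := Finset.card_eq_one.1 h1
      have hau : a = u := by
        rw [ha] at huA
        exact (Finset.mem_singleton.1 huA).symm
      subst hau
      rw [ha, BSAux.cutP_singleton]
      omega
    · obtain ⟨a, b, hab, hAab⟩ := Finset.card_eq_two.1 h2
      subst hAab
      have hdeg2 : ∀ w : Equiv.Perm (Fin n), 2 ≤ deg ((BS n).deleteEdges F) w := by
        intro w
        have h1 := BSAux.deg_deleteEdges_ge (BS n) F hFfin.toFinset hFF w
        have h2 : deg (BS n) w = 2 * n - 3 := BSAux.deg_BS hn w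
        omega
      rcases Finset.mem_insert.1 huA with rfl | hub
      · have := BSAux.cutP_pair_ge ((BS n).deleteEdges F) hab
        have := hdeg2 b
        omega
      · have hub' : u = b := Finset.mem_singleton.1 hub
        subst hub'
        rw [Finset.pair_comm a u]
        have := BSAux.cutP_pair_ge ((BS n).deleteEdges F) (Ne.symm hab)
        have := hdeg2 a
        omega
  · rcases Nat.lt_or_ge Aᶜ.card 3 with hAc3 | hAc3
    · have hvc : v ∈ Aᶜ := Finset.mem_compl.2 hvA
      have hAcpos : 0 < Aᶜ.card := Finset.card_pos.2 ⟨v, hvc⟩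
      rw [BSAux.cutP_comm]
      rcases (by omega : Aᶜ.card = 1 ∨ Aᶜ.card = 2) with h1 | h2
      · obtain ⟨a, ha⟩ := Finset.card_eq_one.1 h1
        have hav : a = v := by
          rw [ha] at hvc
          exact (Finset.mem_singleton.1 hvc).symm
        subst hav
        rw [ha, BSAux.cutP_singleton]
        omega
      · obtain ⟨a, b, hab, hAab⟩ := Finset.card_eq_two.1 h2
        rw [hAab]
        rw [hAab] at hvc
        have hdeg2 : ∀ w : Equiv.Perm (Fin n), 2 ≤ deg ((BS n).deleteEdges F) w := by
          intro w
          have h1 := BSAux.deg_deleteEdges_ge (BS n) F hFfin.toFinset hFF w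
          have h2 : deg (BS n) w = 2 * n - 3 := BSAux.deg_BS hn w
          omega
        rcases Finset.mem_insert.1 hvc with rfl | hvb
        · have := BSAux.cutP_pair_ge ((BS n).deleteEdges F) hab
          have := hdeg2 b
          omega
        · have hvb' : v = b := Finset.mem_singleton.1 hvb
          subst hvb'
          rw [Finset.pair_comm a v]
          have := BSAux.cutP_pair_ge ((BS n).deleteEdges F) (Ne.symm hab)
          have := hdeg2 a
          omega
    · have hiso := BSAux.iso_bound n hn A hA3 hAc3
      have hle := BSAux.cutP_deleteEdges_le (BS n) F hFfin.toFinset hFF A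
      omega
end

section
/- The bound 2n−5 in the edge-fault-tolerant strong Menger edge connectivity of BS_n is sharp: for n ≥ 3 there exists an edge set F_e of BS_n with |F_e| = 2n − 4 and two vertices u, v with d_{BS_n−F_e}(u) = d_{BS_n−F_e}(v) = 2n−3 such that BS_n − F_e contains at most 2n − 4 edge-disjoint (u,v)-paths. -/
open SimpleGraph

namespace BSsharp

lemma swap_congr {α : Type*} [DecidableEq α] {a b c d : α} (h1 : a = c) (h2 : b = d) :
    Equiv.swap a b = Equiv.swap c d := by subst h1; subst h2; rfl

/-- If two swaps agree then their defining pairs agree up to order. -/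
lemma swap_eq_swap {α : Type*} [DecidableEq α] {a b c d : α} (hab : a ≠ b)
    (h : Equiv.swap a b = Equiv.swap c d) : (a = c ∧ b = d) ∨ (a = d ∧ b = c) := by
  have h1 : Equiv.swap c d a = b := by rw [← h]; exact Equiv.swap_apply_left a b
  by_cases hac : a = c
  · subst hac
    rw [Equiv.swap_apply_left] at h1
    exact Or.inl ⟨rfl, h1.symm⟩
  by_cases had : a = d
  · subst had
    rw [Equiv.swap_apply_right] at h1
    exact Or.inr ⟨rfl, h1.symm⟩
  · rw [Equiv.swap_apply_of_ne_of_ne hac had] at h1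
    exact absurd h1 hab

/-- The set of generating transpositions of `BS_n`. -/
def Sset (n : ℕ) : Set (Equiv.Perm (Fin n)) :=
  {s | ∃ i j : Fin n, (j.val = i.val + 1 ∨ i.val = 0) ∧ i ≠ j ∧ s = Equiv.swap i j}

lemma bs_adj {n : ℕ} {x y : Equiv.Perm (Fin n)} :
    (BS n).Adj x y ↔ ∃ s ∈ Sset n, y = x * s := by
  rw [BS, SimpleGraph.fromRel_adj]
  constructor
  · rintro ⟨hne, h | h⟩
    · obtain ⟨i, j, hc, hij, rfl⟩ := h
      exact ⟨_, ⟨i, j, hc, hij, rfl⟩, rfl⟩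
    · obtain ⟨i, j, hc, hij, hx⟩ := h
      refine ⟨_, ⟨i, j, hc, hij, rfl⟩, ?_⟩
      rw [hx, mul_assoc, Equiv.swap_mul_self, mul_one]
  · rintro ⟨s, ⟨i, j, hc, hij, rfl⟩, rfl⟩
    refine ⟨?_, Or.inl ⟨i, j, hc, hij, rfl⟩⟩
    intro hxy
    exact hij (Equiv.swap_eq_one_iff.mp (mul_eq_left.mp hxy.symm))

lemma bs_nbhd {n : ℕ} (x : Equiv.Perm (Fin n)) :
    (BS n).neighborSet x = (x * ·) '' Sset n := by
  ext y
  simp only [SimpleGraph.mem_neighborSet, bs_adj, Set.mem_image]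
  constructor
  · rintro ⟨s, hs, rfl⟩; exact ⟨s, hs, rfl⟩
  · rintro ⟨s, hs, rfl⟩; exact ⟨s, hs, rfl⟩

/-- The adjacent transpositions. -/
def fA (n : ℕ) (k : Fin (n - 1)) : Equiv.Perm (Fin n) :=
  Equiv.swap ⟨k.1, by have := k.2; omega⟩ ⟨k.1 + 1, by have := k.2; omega⟩

/-- The star transpositions. -/
def fB (n : ℕ) (k : Fin (n - 1)) : Equiv.Perm (Fin n) :=
  Equiv.swap ⟨0, by have := k.2; omega⟩ ⟨k.1 + 1, by have := k.2; omega⟩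

lemma Sset_eq (n : ℕ) : Sset n = Set.range (fA n) ∪ Set.range (fB n) := by
  ext s
  constructor
  · rintro ⟨i, j, hc, hij, rfl⟩
    rcases hc with hj | hi
    · left
      have hik : i.1 < n - 1 := by have := j.2; omega
      refine ⟨⟨i.1, hik⟩, ?_⟩
      exact swap_congr (Fin.ext rfl) (Fin.ext hj.symm)
    · right
      have hj1 : 1 ≤ j.1 := by
        rcases Nat.eq_zero_or_pos j.1 with h0 | h1
        · exact absurd (Fin.ext (hi.trans h0.symm) : i = j) hij
        · exact h1
      have hjk : j.1 - 1 < n - 1 := by have := j.2; omega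
      refine ⟨⟨j.1 - 1, hjk⟩, ?_⟩
      exact swap_congr (Fin.ext hi.symm) (Fin.ext (show j.1 - 1 + 1 = j.1 by omega))
  · rintro (⟨k, rfl⟩ | ⟨k, rfl⟩)
    · exact ⟨_, _, Or.inl rfl, Fin.ne_of_val_ne (by simp), rfl⟩
    · exact ⟨_, _, Or.inr rfl, Fin.ne_of_val_ne (by simp), rfl⟩

lemma fA_inj (n : ℕ) : Function.Injective (fA n) := by
  intro k k' h
  unfold fA at h
  rcases swap_eq_swap (Fin.ne_of_val_ne (by simp)) h with ⟨h1, h2⟩ | ⟨h1, h2⟩ <;>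
  · apply Fin.ext
    have e1 := congrArg Fin.val h1
    have e2 := congrArg Fin.val h2
    simp only [] at e1 e2
    omega

lemma fB_inj (n : ℕ) : Function.Injective (fB n) := by
  intro k k' h
  unfold fB at h
  rcases swap_eq_swap (Fin.ne_of_val_ne (by simp)) h with ⟨h1, h2⟩ | ⟨h1, h2⟩ <;>
  · apply Fin.ext
    have e1 := congrArg Fin.val h1
    have e2 := congrArg Fin.val h2
    simp only [] at e1 e2
    omega

lemma rangeAB_inter (n : ℕ) (hn : 3 ≤ n) :
    Set.range (fA n) ∩ Set.range (fB n) = {fA n ⟨0, by omega⟩} := by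
  ext s
  constructor
  · rintro ⟨⟨k, rfl⟩, ⟨k', hk'⟩⟩
    unfold fA fB at hk'
    have hk0 : k.1 = 0 := by
      rcases swap_eq_swap (Fin.ne_of_val_ne (by simp)) hk' with ⟨h1, h2⟩ | ⟨h1, h2⟩
      · have e1 := congrArg Fin.val h1
        exact e1.symm
      · have e1 := congrArg Fin.val h1
        have e2 := congrArg Fin.val h2
        simp only [] at e1 e2
        omega
    exact congrArg (fA n) (Fin.ext hk0)
  · rintro rfl
    exact ⟨⟨⟨0, by omega⟩, rfl⟩, ⟨⟨0, by omega⟩, rfl⟩⟩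

lemma ncard_Sset (n : ℕ) (hn : 3 ≤ n) : (Sset n).ncard = 2 * n - 3 := by
  have hA : (Set.range (fA n)).ncard = n - 1 := by
    rw [← Set.image_univ, Set.ncard_image_of_injective _ (fA_inj n), Set.ncard_univ,
      Nat.card_eq_fintype_card, Fintype.card_fin]
  have hB : (Set.range (fB n)).ncard = n - 1 := by
    rw [← Set.image_univ, Set.ncard_image_of_injective _ (fB_inj n), Set.ncard_univ,
      Nat.card_eq_fintype_card, Fintype.card_fin]
  have hI : (Set.range (fA n) ∩ Set.range (fB n)).ncard = 1 := by
    rw [rangeAB_inter n hn]; exact Set.ncard_singleton _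
  have h := Set.ncard_union_add_ncard_inter (Set.range (fA n)) (Set.range (fB n))
  rw [hA, hB, hI] at h
  rw [Sset_eq]
  omega

lemma ncard_nbhd (n : ℕ) (hn : 3 ≤ n) (x : Equiv.Perm (Fin n)) :
    ((BS n).neighborSet x).ncard = 2 * n - 3 := by
  rw [bs_nbhd, Set.ncard_image_of_injective _ (mul_right_injective x), ncard_Sset n hn]

lemma walk_decomp {V : Type*} {G : SimpleGraph V} {u v : V} (w : G.Walk u v) (h : u ≠ v) :
    ∃ (x : V) (ha : G.Adj u x) (q : G.Walk x v), w = SimpleGraph.Walk.cons ha q := by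
  cases w with
  | nil => exact absurd rfl h
  | cons ha q => exact ⟨_, ha, q, rfl⟩

end BSsharp

open BSsharp in
/-- The bound `2n - 5` is sharp: for `n ≥ 3` there is an edge set `F` of size `2n - 4`
and vertices `u ≠ v`, both of degree `2n - 3` in `BS_n - F`, joined by at most `2n - 4`
edge-disjoint paths in `BS_n - F`. -/
theorem BS_Menger_bound_sharp (n : ℕ) (hn : 3 ≤ n) :
    ∃ F : Set (Sym2 (Equiv.Perm (Fin n))), F ⊆ (BS n).edgeSet ∧ F.ncard = 2 * n - 4 ∧
      ∃ u v : Equiv.Perm (Fin n), u ≠ v ∧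
        deg ((BS n).deleteEdges F) u = 2 * n - 3 ∧
        deg ((BS n).deleteEdges F) v = 2 * n - 3 ∧
        ∀ m : ℕ, HasEdgeDisjointPaths ((BS n).deleteEdges F) u v m → m ≤ 2 * n - 4 := by
  classical
  set i0 : Fin n := ⟨0, by omega⟩ with hi0
  set i1 : Fin n := ⟨1, by omega⟩ with hi1
  set i2 : Fin n := ⟨2, by omega⟩ with hi2
  have h01 : i0 ≠ i1 := Fin.ne_of_val_ne (by norm_num)
  have h02 : i0 ≠ i2 := Fin.ne_of_val_ne (by norm_num)
  have h12 : i1 ≠ i2 := Fin.ne_of_val_ne (by norm_num)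
  set u : Equiv.Perm (Fin n) := 1 with hu
  set u1 : Equiv.Perm (Fin n) := Equiv.swap i0 i1 with hu1
  set v : Equiv.Perm (Fin n) := Equiv.swap i1 i2 with hv
  set e : Sym2 (Equiv.Perm (Fin n)) := s(u, u1) with he
  set F : Set (Sym2 (Equiv.Perm (Fin n))) := (BS n).incidenceSet u1 \ {e} with hF
  -- basic distinctness facts
  have hτS : u1 ∈ Sset n := ⟨i0, i1, Or.inr rfl, h01, rfl⟩
  have hvS : v ∈ Sset n := ⟨i1, i2, Or.inl (by norm_num), h12, rfl⟩
  have hu_ne_u1 : u ≠ u1 := by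
    intro h
    exact h01 (Equiv.swap_eq_one_iff.mp h.symm)
  have hu_ne_v : u ≠ v := by
    intro h
    exact h12 (Equiv.swap_eq_one_iff.mp h.symm)
  have hu1_ne_v : u1 ≠ v := by
    intro h
    rcases swap_eq_swap h01 h with ⟨ha, hb⟩ | ⟨ha, hb⟩
    · exact h01 ha
    · exact h02 ha
  have hadj_u_u1 : (BS n).Adj u u1 := bs_adj.mpr ⟨u1, hτS, (one_mul u1).symm⟩
  have hadj_u_u1' : (BS n).Adj u u1 := hadj_u_u1
  -- v is not adjacent to u1
  have hnadj : ¬ (BS n).Adj v u1 := by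
    intro h
    obtain ⟨s, hs, hveq⟩ := bs_adj.mp h
    have hs' : v * u1 = s := by
      rw [hveq, ← mul_assoc, hv, Equiv.swap_mul_self, one_mul]
    rw [← hs'] at hs
    obtain ⟨a, b, -, hab, hceq⟩ := hs
    -- compute the action of v * u1 on i0 i1 i2
    have hc0 : (v * u1) i0 = i2 := by
      rw [Equiv.Perm.mul_apply, hu1, Equiv.swap_apply_left, hv, Equiv.swap_apply_left]
    have hc1 : (v * u1) i1 = i0 := by
      rw [Equiv.Perm.mul_apply, hu1, Equiv.swap_apply_right, hv,
        Equiv.swap_apply_of_ne_of_ne h01 h02]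
    have hc2 : (v * u1) i2 = i1 := by
      rw [Equiv.Perm.mul_apply, hu1, Equiv.swap_apply_of_ne_of_ne h02.symm h12.symm, hv,
        Equiv.swap_apply_right]
    have hm0 : i0 = a ∨ i0 = b := by
      by_contra hcon
      push_neg at hcon
      have hfix := Equiv.swap_apply_of_ne_of_ne hcon.1 hcon.2
      rw [← hceq, hc0] at hfix
      exact h02 hfix.symm
    have hm1 : i1 = a ∨ i1 = b := by
      by_contra hcon
      push_neg at hcon
      have hfix := Equiv.swap_apply_of_ne_of_ne hcon.1 hcon.2
      rw [← hceq, hc1] at hfix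
      exact h01 hfix
    have hm2 : i2 = a ∨ i2 = b := by
      by_contra hcon
      push_neg at hcon
      have hfix := Equiv.swap_apply_of_ne_of_ne hcon.1 hcon.2
      rw [← hceq, hc2] at hfix
      exact h12 hfix
    rcases hm0 with rfl | rfl
    · rcases hm1 with h' | rfl
      · exact h01 h'.symm
      · rcases hm2 with h' | h'
        · exact h02 h'.symm
        · exact h12 h'.symm
    · rcases hm1 with rfl | h'
      · rcases hm2 with h' | h'
        · exact h12 h'.symm
        · exact h02 h'.symm
      · exact h01 h'.symm
  set G' : SimpleGraph (Equiv.Perm (Fin n)) := (BS n).deleteEdges F with hG'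
  have he_mem : e ∈ (BS n).incidenceSet u1 := by
    rw [he]
    exact (BS n).mk'_mem_incidenceSet_right_iff.mpr hadj_u_u1
  have he_not_F : e ∉ F := fun h => h.2 rfl
  -- cardinality of F
  have hInc : ((BS n).incidenceSet u1).ncard = 2 * n - 3 := by
    have hcongr := Nat.card_congr ((BS n).incidenceSetEquivNeighborSet u1)
    rw [Nat.card_coe_set_eq, Nat.card_coe_set_eq] at hcongr
    rw [hcongr, ncard_nbhd n hn]
  have hFcard : F.ncard = 2 * n - 4 := by
    rw [hF, Set.ncard_diff_singleton_of_mem he_mem, hInc]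
    omega
  -- neighborhoods in G'
  have hNu : G'.neighborSet u = (BS n).neighborSet u := by
    ext y
    simp only [SimpleGraph.mem_neighborSet, hG', SimpleGraph.deleteEdges_adj]
    constructor
    · exact fun h => h.1
    · intro h
      refine ⟨h, fun hFmem => ?_⟩
      rcases Sym2.mem_iff.mp hFmem.1.2 with h1 | h1
      · exact hu_ne_u1 h1.symm
      · exact hFmem.2 (by rw [he, h1]; exact Set.mem_singleton _)
  have hNv : G'.neighborSet v = (BS n).neighborSet v := by
    ext y
    simp only [SimpleGraph.mem_neighborSet, hG', SimpleGraph.deleteEdges_adj]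
    constructor
    · exact fun h => h.1
    · intro h
      refine ⟨h, fun hFmem => ?_⟩
      rcases Sym2.mem_iff.mp hFmem.1.2 with h1 | h1
      · exact hu1_ne_v h1
      · exact hnadj (by rw [h1]; exact h)
  have hadjG'_u_u1 : G'.Adj u u1 := by
    rw [hG', SimpleGraph.deleteEdges_adj]
    exact ⟨hadj_u_u1, he_not_F⟩
  -- in G' the only neighbour of u1 is u
  have hNu1 : G'.neighborSet u1 = {u} := by
    ext y
    simp only [SimpleGraph.mem_neighborSet, hG', SimpleGraph.deleteEdges_adj,
      Set.mem_singleton_iff]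
    constructor
    · rintro ⟨hadj, hnF⟩
      have hyinc : s(u1, y) ∈ (BS n).incidenceSet u1 :=
        (BS n).mk'_mem_incidenceSet_left_iff.mpr hadj
      have heq : s(u1, y) = e := by
        by_contra hne
        exact hnF ⟨hyinc, hne⟩
      rw [he] at heq
      rcases Sym2.eq_iff.mp heq with ⟨h1, h2⟩ | ⟨h1, h2⟩
      · exact absurd h1.symm hu_ne_u1
      · exact h2
    · rintro rfl
      refine ⟨hadj_u_u1.symm, fun hFmem => ?_⟩
      rw [Sym2.eq_swap] at hFmem
      exact he_not_F hFmem
  refine ⟨F, fun x hx => (BS n).incidenceSet_subset u1 hx.1, hFcard, u, v, hu_ne_v, ?_, ?_, ?_⟩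
  · show (G'.neighborSet u).ncard = 2 * n - 3
    rw [hNu, ncard_nbhd n hn]
  · show (G'.neighborSet v).ncard = 2 * n - 3
    rw [hNv, ncard_nbhd n hn]
  · rintro m ⟨P, hP⟩
    choose x ha q hw using fun i => walk_decomp (P i : G'.Walk u v) hu_ne_v
    -- no path starts with the edge to u1
    have hx_ne : ∀ i, x i ≠ u1 := by
      intro i hxi
      have hx_ne_v : x i ≠ v := by rw [hxi]; exact hu1_ne_v
      obtain ⟨c, hc, r, hr⟩ := walk_decomp (q i) hx_ne_v
      have hcu : c = u := by
        have : c ∈ G'.neighborSet (x i) := hc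
        rw [hxi, hNu1] at this
        exact this
      have hnodup := (P i).2.edges_nodup
      rw [hw i, hr] at hnodup
      simp only [SimpleGraph.Walk.edges_cons] at hnodup
      have heq2 : s(u, x i) = s(x i, c) := by
        rw [hxi, hcu, Sym2.eq_swap]
      exact (List.nodup_cons.mp hnodup).1 (heq2 ▸ List.mem_cons_self)
    have hinj : Function.Injective x := by
      intro i j hij
      by_contra hne
      have h1 : s(u, x i) ∈ (P i : G'.Walk u v).edges := by
        rw [hw i]
        simp [SimpleGraph.Walk.edges_cons]
      have h2 : s(u, x i) ∈ (P j : G'.Walk u v).edges := by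
        rw [hw j, hij]
        simp [SimpleGraph.Walk.edges_cons]
      exact hP i j hne h1 h2
    set T : Set (Equiv.Perm (Fin n)) := G'.neighborSet u \ {u1} with hT
    have hmemT : ∀ i, x i ∈ T := fun i => ⟨ha i, by simpa using hx_ne i⟩
    have hu1mem : u1 ∈ G'.neighborSet u := hadjG'_u_u1
    have hTcard : T.ncard = 2 * n - 4 := by
      rw [hT, Set.ncard_diff_singleton_of_mem hu1mem, hNu, ncard_nbhd n hn]
      omega
    have hx' : Function.Injective (fun i : Fin m => (⟨x i, hmemT i⟩ : T)) := by
      intro i j hij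
      exact hinj (congrArg Subtype.val hij)
    calc m = Nat.card (Fin m) := by simp
      _ ≤ Nat.card T := Nat.card_le_card_of_injective _ hx'
      _ = T.ncard := Nat.card_coe_set_eq T
      _ = 2 * n - 4 := hTcard
end

section
/- The bound 6n−17 in the conditional edge-fault-tolerant strong Menger edge connectivity of BS_n is sharp: for n ≥ 4 there exists an edge set F_e of BS_n with |F_e| = 6n − 16 and δ(BS_n − F_e) ≥ 2, and vertices u, v with d_{BS_n−F_e}(u) = d_{BS_n−F_e}(v) = 2n−3, such that BS_n − F_e contains at most 2n − 4 edge-disjoint (u,v)-paths. -/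
open SimpleGraph

namespace BSSharp

variable {n : ℕ}

/-- The generating set of transpositions of `BS n`. -/
def gen (n : ℕ) : Set (Equiv.Perm (Fin n)) :=
  {t | ∃ i j : Fin n, (j.val = i.val + 1 ∨ i.val = 0) ∧ i ≠ j ∧ t = Equiv.swap i j}

lemma gen_ne_one {t : Equiv.Perm (Fin n)} (ht : t ∈ gen n) : t ≠ 1 := by
  obtain ⟨i, j, -, hij, rfl⟩ := ht
  simpa [Equiv.swap_eq_one_iff] using hij

lemma adj_iff {x y : Equiv.Perm (Fin n)} :
    (BS n).Adj x y ↔ ∃ t ∈ gen n, y = x * t := by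
  rw [BS, fromRel_adj]
  constructor
  · rintro ⟨hne, h | h⟩
    · obtain ⟨i, j, h1, h2, rfl⟩ := h
      exact ⟨_, ⟨i, j, h1, h2, rfl⟩, rfl⟩
    · obtain ⟨i, j, h1, h2, rfl⟩ := h
      refine ⟨_, ⟨i, j, h1, h2, rfl⟩, ?_⟩
      rw [mul_assoc, Equiv.swap_mul_self, mul_one]
  · rintro ⟨t, ht, rfl⟩
    refine ⟨fun h => gen_ne_one ht ?_, Or.inl ?_⟩
    · exact (left_eq_mul.mp h).symm ▸ rfl
    · obtain ⟨i, j, h1, h2, rfl⟩ := ht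
      exact ⟨i, j, h1, h2, rfl⟩

lemma neighborSet_eq (x : Equiv.Perm (Fin n)) :
    (BS n).neighborSet x = (x * ·) '' gen n := by
  ext y
  simp only [mem_neighborSet, adj_iff, Set.mem_image]
  constructor
  · rintro ⟨t, ht, rfl⟩; exact ⟨t, ht, rfl⟩
  · rintro ⟨t, ht, rfl⟩; exact ⟨t, ht, rfl⟩

def Pset (n : ℕ) : Set (Fin n × Fin n) :=
  {p | (p.2.val = p.1.val + 1 ∨ p.1.val = 0) ∧ p.1 ≠ p.2}

lemma mem_Pset_lt {p : Fin n × Fin n} (hp : p ∈ Pset n) : p.1.val < p.2.val := by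
  obtain ⟨h1 | h1, h2⟩ := hp
  · omega
  · have : p.1.val ≠ p.2.val := fun h => h2 (Fin.ext h)
    omega

lemma swap_eq_swap {i j k l : Fin n} (h1 : i.val < j.val) (h2 : k.val < l.val)
    (h : Equiv.swap i j = Equiv.swap k l) : i = k ∧ j = l := by
  have hk : Equiv.swap i j k = l := by rw [h, Equiv.swap_apply_left]
  rcases eq_or_ne k i with rfl | hki
  · rw [Equiv.swap_apply_left] at hk; exact ⟨rfl, hk⟩
  rcases eq_or_ne k j with rfl | hkj
  · rw [Equiv.swap_apply_right] at hk
    subst hk; omega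
  · rw [Equiv.swap_apply_of_ne_of_ne hki hkj] at hk
    subst hk; omega

lemma gen_eq_image : gen n = (fun p : Fin n × Fin n => Equiv.swap p.1 p.2) '' Pset n := by
  ext t
  constructor
  · rintro ⟨i, j, h1, h2, rfl⟩; exact ⟨(i, j), ⟨h1, h2⟩, rfl⟩
  · rintro ⟨⟨i, j⟩, ⟨h1, h2⟩, rfl⟩; exact ⟨i, j, h1, h2, rfl⟩

lemma ncard_Pset (hn : 4 ≤ n) : (Pset n).ncard = 2 * n - 3 := by
  classical
  have h0 : (0:ℕ) < n := by omega
  set P1 : Set (Fin n × Fin n) := {p | p.2.val = p.1.val + 1} with hP1d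
  set P2 : Set (Fin n × Fin n) := {p | p.1.val = 0 ∧ p.1 ≠ p.2} with hP2d
  have hP : Pset n = P1 ∪ P2 := by
    ext p
    constructor
    · rintro ⟨h1 | h1, h2⟩
      · exact Or.inl h1
      · exact Or.inr ⟨h1, h2⟩
    · rintro (h | ⟨h1, h2⟩)
      · refine ⟨Or.inl h, fun he => ?_⟩
        have h' : p.2.val = p.1.val + 1 := h
        rw [he] at h'; omega
      · exact ⟨Or.inr h1, h2⟩
  have hcard1 : P1.ncard = n - 1 := by
    have hinj : Function.Injective (fun k : Fin (n-1) =>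
        ((⟨k.val, by have := k.isLt; omega⟩ : Fin n), (⟨k.val+1, by have := k.isLt; omega⟩ : Fin n))) := by
      intro k k' h
      have := congrArg (fun p => p.1.val) h
      exact Fin.ext this
    have hr : P1 = Set.range (fun k : Fin (n-1) =>
        ((⟨k.val, by have := k.isLt; omega⟩ : Fin n), (⟨k.val+1, by have := k.isLt; omega⟩ : Fin n))) := by
      ext p
      constructor
      · intro h
        have hlt : p.1.val < n - 1 := by have := p.2.isLt; simp only [hP1d, Set.mem_setOf_eq] at h; omega
        refine ⟨⟨p.1.val, hlt⟩, ?_⟩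
        have h' : p.2.val = p.1.val + 1 := h
        exact Prod.ext (Fin.ext rfl) (Fin.ext h'.symm)
      · rintro ⟨k, rfl⟩
        show _ = _ + 1
        rfl
    rw [hr, ← Set.image_univ, Set.ncard_image_of_injective _ hinj, Set.ncard_univ]
    simp
  have hcard2 : P2.ncard = n - 1 := by
    have hinj : Function.Injective (fun j : Fin n => ((⟨0, h0⟩ : Fin n), j)) := by
      intro k k' h; exact congrArg Prod.snd h
    have hr : P2 = (fun j : Fin n => ((⟨0, h0⟩ : Fin n), j)) '' {(⟨0, h0⟩ : Fin n)}ᶜ := by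
      ext p
      constructor
      · rintro ⟨h1, h2⟩
        have hp1 : p.1 = ⟨0, h0⟩ := Fin.ext h1
        refine ⟨p.2, ?_, ?_⟩
        · simp only [Set.mem_compl_iff, Set.mem_singleton_iff]
          intro h; exact h2 (by rw [hp1, h])
        · exact Prod.ext hp1.symm rfl
      · rintro ⟨j, hj, rfl⟩
        refine ⟨rfl, fun h => ?_⟩
        simp only [Set.mem_compl_iff, Set.mem_singleton_iff] at hj
        exact hj h.symm
    rw [hr, Set.ncard_image_of_injective _ hinj, Set.compl_eq_univ_diff,
      Set.ncard_diff (Set.subset_univ _), Set.ncard_univ, Set.ncard_singleton]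
    simp
  have hint : P1 ∩ P2 = {((⟨0, h0⟩ : Fin n), (⟨1, by omega⟩ : Fin n))} := by
    ext p
    constructor
    · rintro ⟨h1, h2, h3⟩
      have : p.1 = ⟨0, h0⟩ := Fin.ext h2
      have h4 : p.2 = ⟨1, by omega⟩ := Fin.ext (by rw [h1, h2])
      exact Set.mem_singleton_iff.mpr (Prod.ext this h4)
    · rintro rfl
      exact ⟨rfl, rfl, fun h => by have := congrArg Fin.val h; simp at this⟩
  have := Set.ncard_union_add_ncard_inter P1 P2 (Set.toFinite _) (Set.toFinite _)
  rw [hint, Set.ncard_singleton, hcard1, hcard2] at this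
  rw [hP]
  omega

lemma ncard_gen (hn : 4 ≤ n) : (gen n).ncard = 2 * n - 3 := by
  rw [gen_eq_image, Set.ncard_image_of_injOn, ncard_Pset hn]
  intro p hp q hq h
  obtain ⟨h1, h2⟩ := swap_eq_swap (mem_Pset_lt hp) (mem_Pset_lt hq) h
  exact Prod.ext h1 h2

lemma ncard_neighborSet (hn : 4 ≤ n) (x : Equiv.Perm (Fin n)) :
    ((BS n).neighborSet x).ncard = 2 * n - 3 := by
  rw [neighborSet_eq, Set.ncard_image_of_injective _ (mul_right_injective x), ncard_gen hn]

lemma not_mem_gen {x : Equiv.Perm (Fin n)} {p q r : Fin n}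
    (hpq : p ≠ q) (hpr : p ≠ r) (hqr : q ≠ r)
    (hp : x p ≠ p) (hq : x q ≠ q) (hr : x r ≠ r) : x ∉ gen n := by
  rintro ⟨i, j, -, hij, rfl⟩
  have key : ∀ z : Fin n, Equiv.swap i j z ≠ z → z = i ∨ z = j := by
    intro z hz
    by_contra h
    push_neg at h
    exact hz (Equiv.swap_apply_of_ne_of_ne h.1 h.2)
  rcases key p hp with hp' | hp' <;> rcases key q hq with hq' | hq' <;>
      rcases key r hr with hr' | hr' <;>
    first
      | exact hpq (hp'.trans hq'.symm)
      | exact hpr (hp'.trans hr'.symm)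
      | exact hqr (hq'.trans hr'.symm)

lemma incidenceSet_eq (x : Equiv.Perm (Fin n)) :
    (BS n).incidenceSet x = (fun y => s(x, y)) '' (BS n).neighborSet x := by
  ext e
  refine Sym2.ind (fun p q => ?_) e
  rw [mk'_mem_incidenceSet_iff]
  constructor
  · rintro ⟨hadj, rfl | rfl⟩
    · exact ⟨q, hadj, rfl⟩
    · exact ⟨p, hadj.symm, Sym2.eq_swap⟩
  · rintro ⟨y, hy, he⟩
    rcases Sym2.eq_iff.mp he with ⟨rfl, rfl⟩ | ⟨rfl, rfl⟩
    · exact ⟨hy, Or.inl rfl⟩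
    · exact ⟨Adj.symm hy, Or.inr rfl⟩

lemma ncard_incidenceSet (hn : 4 ≤ n) (x : Equiv.Perm (Fin n)) :
    ((BS n).incidenceSet x).ncard = 2 * n - 3 := by
  rw [incidenceSet_eq, Set.ncard_image_of_injective _ (fun y z h => Sym2.congr_right.mp h),
    ncard_neighborSet hn]

lemma two_le_deg {V : Type*} [Finite V] (G : SimpleGraph V) (w x y : V) (hxy : x ≠ y)
    (h1 : G.Adj w x) (h2 : G.Adj w y) : 2 ≤ deg G w := by
  have hsub : ({x, y} : Set V) ⊆ G.neighborSet w := by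
    rintro z (rfl | rfl)
    · exact h1
    · exact h2
  calc 2 = ({x, y} : Set V).ncard := (Set.ncard_pair hxy).symm
    _ ≤ (G.neighborSet w).ncard := Set.ncard_le_ncard hsub (Set.toFinite _)

end BSSharp

open BSSharp

set_option maxHeartbeats 4000000

/-- The bound `6n - 17` is sharp: for `n ≥ 4` there is an edge set `F` of size `6n - 16`
with `δ(BS_n - F) ≥ 2`, and vertices `u ≠ v`, both of degree `2n - 3` in `BS_n - F`,
joined by at most `2n - 4` edge-disjoint paths in `BS_n - F`. -/
theorem BS_conditional_Menger_bound_sharp (n : ℕ) (hn : 4 ≤ n) :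
    ∃ F : Set (Sym2 (Equiv.Perm (Fin n))), F ⊆ (BS n).edgeSet ∧ F.ncard = 6 * n - 16 ∧
      (∀ w : Equiv.Perm (Fin n), 2 ≤ deg ((BS n).deleteEdges F) w) ∧
      ∃ u v : Equiv.Perm (Fin n), u ≠ v ∧
        deg ((BS n).deleteEdges F) u = 2 * n - 3 ∧
        deg ((BS n).deleteEdges F) v = 2 * n - 3 ∧
        ∀ m : ℕ, HasEdgeDisjointPaths ((BS n).deleteEdges F) u v m → m ≤ 2 * n - 4 := by
  classical
  have h0 : (0:ℕ) < n := by omega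
  set i0 : Fin n := ⟨0, by omega⟩ with hi0
  set i1 : Fin n := ⟨1, by omega⟩ with hi1
  set i2 : Fin n := ⟨2, by omega⟩ with hi2
  set i3 : Fin n := ⟨3, by omega⟩ with hi3
  have f01 : i0 ≠ i1 := by simp [hi0, hi1, Fin.ext_iff]
  have f02 : i0 ≠ i2 := by simp [hi0, hi2, Fin.ext_iff]
  have f23 : i2 ≠ i3 := by simp [hi2, hi3, Fin.ext_iff]
  have f13 : i1 ≠ i3 := by simp [hi1, hi3, Fin.ext_iff]
  have f12 : i1 ≠ i2 := by simp [hi1, hi2, Fin.ext_iff]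
  have f03 : i0 ≠ i3 := by simp [hi0, hi3, Fin.ext_iff]
  set a : Equiv.Perm (Fin n) := Equiv.swap i0 i1 with hadef
  set b : Equiv.Perm (Fin n) := Equiv.swap i2 i3 with hbdef
  set c : Equiv.Perm (Fin n) := Equiv.swap i0 i2 with hcdef
  have ea0 : a i0 = i1 := Equiv.swap_apply_left _ _
  have ea1 : a i1 = i0 := Equiv.swap_apply_right _ _
  have ea2 : a i2 = i2 := Equiv.swap_apply_of_ne_of_ne f02.symm f12.symm
  have ea3 : a i3 = i3 := Equiv.swap_apply_of_ne_of_ne f03.symm f13.symm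
  have eb2 : b i2 = i3 := Equiv.swap_apply_left _ _
  have eb3 : b i3 = i2 := Equiv.swap_apply_right _ _
  have eb0 : b i0 = i0 := Equiv.swap_apply_of_ne_of_ne f02 f03
  have eb1 : b i1 = i1 := Equiv.swap_apply_of_ne_of_ne f12 f13
  have ec0 : c i0 = i2 := Equiv.swap_apply_left _ _
  have ec2 : c i2 = i0 := Equiv.swap_apply_right _ _
  have ec1 : c i1 = i1 := Equiv.swap_apply_of_ne_of_ne f01.symm f12
  have ec3 : c i3 = i3 := Equiv.swap_apply_of_ne_of_ne f03.symm f23.symm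
  have haa : a * a = 1 := by rw [hadef]; exact Equiv.swap_mul_self _ _
  have hbb : b * b = 1 := by rw [hbdef]; exact Equiv.swap_mul_self _ _
  have hcc : c * c = 1 := by rw [hcdef]; exact Equiv.swap_mul_self _ _
  have hcomm : a * b = b * a := by
    ext x
    simp only [Equiv.Perm.mul_apply]
    rcases eq_or_ne x i0 with rfl | h0x
    · rw [eb0, ea0, eb1]
    rcases eq_or_ne x i1 with rfl | h1x
    · rw [eb1, ea1, eb0]
    rcases eq_or_ne x i2 with rfl | h2x
    · rw [ea2, eb2, ea3]
    rcases eq_or_ne x i3 with rfl | h3x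
    · rw [ea3, eb3, ea2]
    simp only [show b x = x from Equiv.swap_apply_of_ne_of_ne h2x h3x,
      show a x = x from Equiv.swap_apply_of_ne_of_ne h0x h1x]
  -- basic distinctness of the six permutations
  have ha1 : a ≠ 1 := by
    rw [hadef, Ne, Equiv.swap_eq_one_iff]; exact f01
  have hb1 : b ≠ 1 := by
    rw [hbdef, Ne, Equiv.swap_eq_one_iff]; exact f23
  have hc1 : c ≠ 1 := by
    rw [hcdef, Ne, Equiv.swap_eq_one_iff]; exact f02
  have ne_pt : ∀ (x y : Equiv.Perm (Fin n)) (z : Fin n), x z ≠ y z → x ≠ y := by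
    intro x y z h he
    exact h (by rw [he])
  have hab1 : a * b ≠ 1 := by
    refine ne_pt _ _ i2 ?_
    rw [Equiv.Perm.mul_apply, eb2, ea3, Equiv.Perm.one_apply]
    exact f23.symm
  have hac1 : a * c ≠ 1 := by
    refine ne_pt _ _ i2 ?_
    rw [Equiv.Perm.mul_apply, ec2, ea0, Equiv.Perm.one_apply]
    exact f12
  have hanb : a ≠ b := by
    refine ne_pt _ _ i0 ?_
    rw [ea0, eb0]; exact f01.symm
  have hanc : a ≠ c := by
    refine ne_pt _ _ i1 ?_
    rw [ea1, ec1]; exact f01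
  have hbnc : b ≠ c := by
    refine ne_pt _ _ i0 ?_
    rw [eb0, ec0]; exact f02
  have ha_ab : a ≠ a * b := fun h => hb1 (left_eq_mul.mp h)
  have ha_ac : a ≠ a * c := fun h => hc1 (left_eq_mul.mp h)
  have hab_b : a * b ≠ b := fun h => ha1 (mul_eq_right.mp h)
  have hab_ac : a * b ≠ a * c := fun h => hbnc (mul_left_cancel h)
  have hab_c : a * b ≠ c := by
    refine ne_pt _ _ i3 ?_
    rw [Equiv.Perm.mul_apply, eb3, ea2, ec3]; exact f23
  have hb_ac : b ≠ a * c := by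
    refine ne_pt _ _ i0 ?_
    rw [Equiv.Perm.mul_apply, eb0, ec0, ea2]; exact f02
  -- generator membership
  have hag : a ∈ gen n := ⟨i0, i1, Or.inr rfl, f01, hadef⟩
  have hbg : b ∈ gen n := ⟨i2, i3, Or.inl rfl, f23, hbdef⟩
  have hcg : c ∈ gen n := ⟨i0, i2, Or.inr rfl, f02, hcdef⟩
  -- non-generators
  have hab_ng : a * b ∉ gen n := by
    refine not_mem_gen f01 f02 f12 ?_ ?_ ?_ <;> simp only [Equiv.Perm.mul_apply]
    · rw [eb0, ea0]; exact f01.symm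
    · rw [eb1, ea1]; exact f01
    · rw [eb2, ea3]; exact f23.symm
  have hca_ng : c * a ∉ gen n := by
    refine not_mem_gen f01 f02 f12 ?_ ?_ ?_ <;> simp only [Equiv.Perm.mul_apply]
    · rw [ea0, ec1]; exact f01.symm
    · rw [ea1, ec0]; exact f12.symm
    · rw [ea2, ec2]; exact f02
  have hcb_ng : c * b ∉ gen n := by
    refine not_mem_gen f02 f03 f23 ?_ ?_ ?_ <;> simp only [Equiv.Perm.mul_apply]
    · rw [eb0, ec0]; exact f02.symm
    · rw [eb2, ec3]; exact f23.symm
    · rw [eb3, ec2]; exact f03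
  have hcab_ng : c * (a * b) ∉ gen n := by
    refine not_mem_gen f01 f02 f12 ?_ ?_ ?_ <;> simp only [Equiv.Perm.mul_apply]
    · rw [eb0, ea0, ec1]; exact f01.symm
    · rw [eb1, ea1, ec0]; exact f12.symm
    · rw [eb2, ea3, ec3]; exact f23.symm
  -- adjacency facts
  have adj_1_a : (BS n).Adj 1 a := adj_iff.mpr ⟨a, hag, (one_mul a).symm⟩
  have adj_1_b : (BS n).Adj 1 b := adj_iff.mpr ⟨b, hbg, (one_mul b).symm⟩
  have adj_a_ab : (BS n).Adj a (a * b) := adj_iff.mpr ⟨b, hbg, rfl⟩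
  have adj_a_ac : (BS n).Adj a (a * c) := adj_iff.mpr ⟨c, hcg, rfl⟩
  have adj_ab_b : (BS n).Adj (a * b) b := by
    refine adj_iff.mpr ⟨a, hag, ?_⟩
    rw [hcomm, mul_assoc, haa, mul_one]
  have adj_b_1 : (BS n).Adj b 1 := adj_iff.mpr ⟨b, hbg, hbb.symm⟩
  -- non-adjacency facts
  have nadj_1_ab : ¬ (BS n).Adj 1 (a * b) := by
    rw [adj_iff]
    rintro ⟨t, ht, h⟩
    rw [one_mul] at h
    exact hab_ng (h ▸ ht)
  have nadj_a_b : ¬ (BS n).Adj a b := by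
    rw [adj_iff]
    rintro ⟨t, ht, h⟩
    have ht' : t = a * b := by rw [h, ← mul_assoc, haa, one_mul]
    exact hab_ng (ht' ▸ ht)
  have nadj_c_a : ¬ (BS n).Adj c a := by
    rw [adj_iff]
    rintro ⟨t, ht, h⟩
    have ht' : t = c * a := by rw [h, ← mul_assoc, hcc, one_mul]
    exact hca_ng (ht' ▸ ht)
  have nadj_c_b : ¬ (BS n).Adj c b := by
    rw [adj_iff]
    rintro ⟨t, ht, h⟩
    have ht' : t = c * b := by rw [h, ← mul_assoc, hcc, one_mul]
    exact hcb_ng (ht' ▸ ht)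
  have nadj_c_ab : ¬ (BS n).Adj c (a * b) := by
    rw [adj_iff]
    rintro ⟨t, ht, h⟩
    have ht' : t = c * (a * b) := by rw [h, ← mul_assoc, hcc, one_mul]
    exact hcab_ng (ht' ▸ ht)
  -- the removed edge set
  set Kset : Set (Sym2 (Equiv.Perm (Fin n))) :=
    {s((1 : Equiv.Perm (Fin n)), a), s(a, a*b), s(a*b, b), s(b, 1), s(a, a*c)} with hKdef
  set Un : Set (Sym2 (Equiv.Perm (Fin n))) :=
    (BS n).incidenceSet a ∪ (BS n).incidenceSet (a*b) ∪ (BS n).incidenceSet b with hUdef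
  set Fe : Set (Sym2 (Equiv.Perm (Fin n))) := Un \ Kset with hFdef
  have hK1 : s((1 : Equiv.Perm (Fin n)), a) ∈ Kset := by rw [hKdef]; left; rfl
  have hK2 : s(a, a*b) ∈ Kset := by rw [hKdef]; right; left; rfl
  have hK3 : s(a*b, b) ∈ Kset := by rw [hKdef]; right; right; left; rfl
  have hK4 : s(b, (1 : Equiv.Perm (Fin n))) ∈ Kset := by rw [hKdef]; right; right; right; left; rfl
  have hK5 : s(a, a*c) ∈ Kset := by rw [hKdef]; right; right; right; right; rfl
  have hK1' : s(a, (1 : Equiv.Perm (Fin n))) ∈ Kset := by rw [Sym2.eq_swap]; exact hK1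
  have hK2' : s(a*b, a) ∈ Kset := by rw [Sym2.eq_swap]; exact hK2
  have hK3' : s(b, a*b) ∈ Kset := by rw [Sym2.eq_swap]; exact hK3
  -- `Fe` consists of edges
  have hFsub : Fe ⊆ (BS n).edgeSet := by
    intro e he
    rcases he.1 with (h | h) | h
    exacts [(BS n).incidenceSet_subset a h, (BS n).incidenceSet_subset _ h,
      (BS n).incidenceSet_subset b h]
  -- cardinality of Kset
  have hsne : ∀ (x y z w : Equiv.Perm (Fin n)), (x ≠ z ∨ y ≠ w) → (x ≠ w ∨ y ≠ z) →
      s(x,y) ≠ s(z,w) := by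
    intro x y z w h1 h2 he
    rcases Sym2.eq_iff.mp he with ⟨hx, hy⟩ | ⟨hx, hy⟩
    · rcases h1 with h | h; exacts [h hx, h hy]
    · rcases h2 with h | h; exacts [h hx, h hy]
  have d12 : s((1:Equiv.Perm (Fin n)), a) ≠ s(a, a*b) :=
    hsne _ _ _ _ (Or.inl ha1.symm) (Or.inl hab1.symm)
  have d13 : s((1:Equiv.Perm (Fin n)), a) ≠ s(a*b, b) :=
    hsne _ _ _ _ (Or.inl hab1.symm) (Or.inl hb1.symm)
  have d14 : s((1:Equiv.Perm (Fin n)), a) ≠ s(b, 1) :=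
    hsne _ _ _ _ (Or.inl hb1.symm) (Or.inr hanb)
  have d15 : s((1:Equiv.Perm (Fin n)), a) ≠ s(a, a*c) :=
    hsne _ _ _ _ (Or.inl ha1.symm) (Or.inl hac1.symm)
  have d23 : s(a, a*b) ≠ s(a*b, b) := hsne _ _ _ _ (Or.inl ha_ab) (Or.inl hanb)
  have d24 : s(a, a*b) ≠ s(b, 1) := hsne _ _ _ _ (Or.inl hanb) (Or.inl ha1)
  have d25 : s(a, a*b) ≠ s(a, a*c) := hsne _ _ _ _ (Or.inr hab_ac) (Or.inl ha_ac)
  have d34 : s(a*b, b) ≠ s(b, 1) := hsne _ _ _ _ (Or.inl hab_b) (Or.inl hab1)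
  have d35 : s(a*b, b) ≠ s(a, a*c) := hsne _ _ _ _ (Or.inl ha_ab.symm) (Or.inl hab_ac)
  have d45 : s(b, (1:Equiv.Perm (Fin n))) ≠ s(a, a*c) :=
    hsne _ _ _ _ (Or.inl hanb.symm) (Or.inl hb_ac)
  have hKcard : Kset.ncard = 5 := by
    have hn1 : s((1:Equiv.Perm (Fin n)), a) ∉
        ({s(a, a*b), s(a*b, b), s(b, 1), s(a, a*c)} : Set (Sym2 (Equiv.Perm (Fin n)))) := by
      intro h
      simp only [Set.mem_insert_iff, Set.mem_singleton_iff] at h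
      rcases h with h|h|h|h
      exacts [d12 h, d13 h, d14 h, d15 h]
    have hn2 : s(a, a*b) ∉
        ({s(a*b, b), s(b, 1), s(a, a*c)} : Set (Sym2 (Equiv.Perm (Fin n)))) := by
      intro h
      simp only [Set.mem_insert_iff, Set.mem_singleton_iff] at h
      rcases h with h|h|h
      exacts [d23 h, d24 h, d25 h]
    have hn3 : s(a*b, b) ∉ ({s(b, 1), s(a, a*c)} : Set (Sym2 (Equiv.Perm (Fin n)))) := by
      intro h
      simp only [Set.mem_insert_iff, Set.mem_singleton_iff] at h
      rcases h with h|h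
      exacts [d34 h, d35 h]
    have hn4 : s(b, (1:Equiv.Perm (Fin n))) ∉
        ({s(a, a*c)} : Set (Sym2 (Equiv.Perm (Fin n)))) := by
      intro h
      rw [Set.mem_singleton_iff] at h
      exact d45 h
    rw [hKdef, Set.ncard_insert_of_notMem hn1 (Set.toFinite _),
      Set.ncard_insert_of_notMem hn2 (Set.toFinite _),
      Set.ncard_insert_of_notMem hn3 (Set.toFinite _),
      Set.ncard_insert_of_notMem hn4 (Set.toFinite _), Set.ncard_singleton]
  -- cardinality of Un
  have hint_ab : (BS n).incidenceSet a ∩ (BS n).incidenceSet (a*b) = {s(a, a*b)} :=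
    SimpleGraph.incidenceSet_inter_incidenceSet_of_adj _ adj_a_ab
  have h12 := Set.ncard_union_add_ncard_inter ((BS n).incidenceSet a)
    ((BS n).incidenceSet (a*b)) (Set.toFinite _) (Set.toFinite _)
  rw [hint_ab, Set.ncard_singleton, ncard_incidenceSet hn, ncard_incidenceSet hn] at h12
  have hint_3 : ((BS n).incidenceSet a ∪ (BS n).incidenceSet (a*b)) ∩ (BS n).incidenceSet b
      = {s(a*b, b)} := by
    rw [Set.union_inter_distrib_right,
      SimpleGraph.incidenceSet_inter_incidenceSet_of_not_adj _ nadj_a_b hanb,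
      SimpleGraph.incidenceSet_inter_incidenceSet_of_adj _ adj_ab_b, Set.empty_union]
  have h123 := Set.ncard_union_add_ncard_inter
    ((BS n).incidenceSet a ∪ (BS n).incidenceSet (a*b)) ((BS n).incidenceSet b)
    (Set.toFinite _) (Set.toFinite _)
  rw [hint_3, Set.ncard_singleton, ncard_incidenceSet hn] at h123
  have hUcard : Un.ncard = 6*n - 11 := by rw [hUdef]; omega
  have hKsubU : Kset ⊆ Un := by
    rw [hKdef, hUdef]
    intro e h
    simp only [Set.mem_insert_iff, Set.mem_singleton_iff] at h
    rcases h with rfl|rfl|rfl|rfl|rfl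
    · exact Set.mem_union_left _ (Set.mem_union_left _
        ((SimpleGraph.mk'_mem_incidenceSet_right_iff (BS n)).mpr adj_1_a))
    · exact Set.mem_union_left _ (Set.mem_union_left _
        ((SimpleGraph.mk'_mem_incidenceSet_left_iff (BS n)).mpr adj_a_ab))
    · exact Set.mem_union_left _ (Set.mem_union_right _
        ((SimpleGraph.mk'_mem_incidenceSet_left_iff (BS n)).mpr adj_ab_b))
    · exact Set.mem_union_right _ ((SimpleGraph.mk'_mem_incidenceSet_left_iff (BS n)).mpr adj_b_1)
    · exact Set.mem_union_left _ (Set.mem_union_left _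
        ((SimpleGraph.mk'_mem_incidenceSet_left_iff (BS n)).mpr adj_a_ac))
  have hFcard : Fe.ncard = 6*n - 16 := by
    rw [hFdef, Set.ncard_diff hKsubU (Set.toFinite _), hKcard, hUcard]
    omega
  -- minimum degree at least two
  have hminde : ∀ w : Equiv.Perm (Fin n), 2 ≤ deg ((BS n).deleteEdges Fe) w := by
    intro w
    by_cases hw1 : w = a
    · subst hw1
      refine two_le_deg _ _ 1 (a*b) hab1.symm ?_ ?_
      · exact deleteEdges_adj.mpr ⟨adj_1_a.symm, fun hF => hF.2 hK1'⟩
      · exact deleteEdges_adj.mpr ⟨adj_a_ab, fun hF => hF.2 hK2⟩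
    by_cases hw2 : w = a*b
    · subst hw2
      refine two_le_deg _ _ a b hanb ?_ ?_
      · exact deleteEdges_adj.mpr ⟨adj_a_ab.symm, fun hF => hF.2 hK2'⟩
      · exact deleteEdges_adj.mpr ⟨adj_ab_b, fun hF => hF.2 hK3⟩
    by_cases hw3 : w = b
    · subst hw3
      refine two_le_deg _ _ (a*b) 1 hab1 ?_ ?_
      · exact deleteEdges_adj.mpr ⟨adj_ab_b.symm, fun hF => hF.2 hK3'⟩
      · exact deleteEdges_adj.mpr ⟨adj_b_1, fun hF => hF.2 hK4⟩
    · have hsub : (BS n).neighborSet w \ {a, a*b, b} ⊆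
          ((BS n).deleteEdges Fe).neighborSet w := by
        rintro y ⟨hy, hmem⟩
        simp only [Set.mem_insert_iff, Set.mem_singleton_iff] at hmem
        push_neg at hmem
        refine (SimpleGraph.mem_neighborSet _ _ _).mpr (deleteEdges_adj.mpr ⟨hy, fun hF => ?_⟩)
        have he : s(w,y) ∈ Un := hF.1
        rw [hUdef] at he
        rcases he with (h | h) | h
        · rcases Sym2.mem_iff.mp h.2 with h' | h'
          exacts [hw1 h'.symm, hmem.1 h'.symm]
        · rcases Sym2.mem_iff.mp h.2 with h' | h'
          exacts [hw2 h'.symm, hmem.2.1 h'.symm]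
        · rcases Sym2.mem_iff.mp h.2 with h' | h'
          exacts [hw3 h'.symm, hmem.2.2 h'.symm]
      have h3 : ({a, a*b, b} : Set (Equiv.Perm (Fin n))).ncard ≤ 3 := by
        refine le_trans (Set.ncard_insert_le _ _) ?_
        have h4 := Set.ncard_insert_le (a*b) ({b} : Set (Equiv.Perm (Fin n)))
        rw [Set.ncard_singleton] at h4
        omega
      have h4 := Set.ncard_le_ncard_diff_add_ncard ((BS n).neighborSet w)
        {a, a*b, b} (Set.toFinite _)
      rw [ncard_neighborSet hn] at h4
      have h5 := Set.ncard_le_ncard hsub (Set.toFinite _)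
      show 2 ≤ (((BS n).deleteEdges Fe).neighborSet w).ncard
      omega
  -- degree of u = 1
  have hdegu : deg ((BS n).deleteEdges Fe) 1 = 2*n-3 := by
    have hns : ((BS n).deleteEdges Fe).neighborSet 1 = (BS n).neighborSet 1 := by
      ext y
      simp only [SimpleGraph.mem_neighborSet, deleteEdges_adj]
      constructor
      · exact fun h => h.1
      · intro h
        refine ⟨h, fun hF => ?_⟩
        have he : s((1 : Equiv.Perm (Fin n)), y) ∈ Un := hF.1
        rw [hUdef] at he
        rcases he with (h' | h') | h'
        · rcases Sym2.mem_iff.mp h'.2 with h'' | h''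
          · exact ha1 h''
          · subst h''
            exact hF.2 hK1
        · rcases Sym2.mem_iff.mp h'.2 with h'' | h''
          · exact hab1 h''
          · rw [← h''] at h
            exact nadj_1_ab h
        · rcases Sym2.mem_iff.mp h'.2 with h'' | h''
          · exact hb1 h''
          · subst h''
            exact hF.2 (by rw [Sym2.eq_swap]; exact hK4)
    show (((BS n).deleteEdges Fe).neighborSet 1).ncard = 2*n-3
    rw [hns, ncard_neighborSet hn]
  -- degree of v = c
  have hdegv : deg ((BS n).deleteEdges Fe) c = 2*n-3 := by
    have hns : ((BS n).deleteEdges Fe).neighborSet c = (BS n).neighborSet c := by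
      ext y
      simp only [SimpleGraph.mem_neighborSet, deleteEdges_adj]
      constructor
      · exact fun h => h.1
      · intro h
        refine ⟨h, fun hF => ?_⟩
        have he : s(c, y) ∈ Un := hF.1
        rw [hUdef] at he
        rcases he with (h' | h') | h'
        · rcases Sym2.mem_iff.mp h'.2 with h'' | h''
          · exact hanc h''
          · rw [← h''] at h
            exact nadj_c_a h
        · rcases Sym2.mem_iff.mp h'.2 with h'' | h''
          · exact hab_c h''
          · rw [← h''] at h
            exact nadj_c_ab h
        · rcases Sym2.mem_iff.mp h'.2 with h'' | h''
          · exact hbnc h''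
          · rw [← h''] at h
            exact nadj_c_b h
    show (((BS n).deleteEdges Fe).neighborSet c).ncard = 2*n-3
    rw [hns, ncard_neighborSet hn]
  refine ⟨Fe, hFsub, hFcard, hminde, 1, c, fun h => hc1 h.symm, hdegu, hdegv, ?_⟩
  rintro m ⟨P, hP⟩
  set S : Set (Equiv.Perm (Fin n)) := {1, a, a*b, b} with hSdef
  have huS : (1 : Equiv.Perm (Fin n)) ∈ S := Or.inl rfl
  have haS : a ∈ S := Or.inr (Or.inl rfl)
  have habS : a*b ∈ S := Or.inr (Or.inr (Or.inl rfl))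
  have hbS : b ∈ S := Or.inr (Or.inr (Or.inr rfl))
  have hvS : c ∉ S := by
    rw [hSdef]
    simp only [Set.mem_insert_iff, Set.mem_singleton_iff]
    push_neg
    exact ⟨hc1, fun h => hanc h.symm, fun h => hab_c h.symm, fun h => hbnc h.symm⟩
  set C : Set (Sym2 (Equiv.Perm (Fin n))) :=
    (fun y => s((1 : Equiv.Perm (Fin n)), y)) '' ((BS n).neighborSet 1 \ {a, b}) ∪ {s(a, a*c)}
    with hCdef
  have hCcard : C.ncard ≤ 2*n - 4 := by
    have hpairsub : ({a, b} : Set (Equiv.Perm (Fin n))) ⊆ (BS n).neighborSet 1 := by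
      rintro z (rfl | rfl)
      exacts [adj_1_a, adj_1_b]
    have hd : ((BS n).neighborSet 1 \ ({a, b} : Set (Equiv.Perm (Fin n)))).ncard
        = 2*n-3-2 := by
      rw [Set.ncard_diff hpairsub (Set.toFinite _), ncard_neighborSet hn, Set.ncard_pair hanb]
    have himg : ((fun y => s((1 : Equiv.Perm (Fin n)), y)) ''
        ((BS n).neighborSet 1 \ ({a, b} : Set (Equiv.Perm (Fin n))))).ncard = 2*n-3-2 := by
      rw [Set.ncard_image_of_injective _ (fun y z h => Sym2.congr_right.mp h), hd]
    have hle := Set.ncard_union_le ((fun y => s((1 : Equiv.Perm (Fin n)), y)) ''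
        ((BS n).neighborSet 1 \ ({a, b} : Set (Equiv.Perm (Fin n)))))
        ({s(a, a*c)} : Set (Sym2 (Equiv.Perm (Fin n))))
    rw [himg, Set.ncard_singleton] at hle
    rw [hCdef]
    omega
  have hstep : ∀ i : Fin m, ∃ e, e ∈ (P i : ((BS n).deleteEdges Fe).Walk 1 c).edges ∧ e ∈ C := by
    intro i
    obtain ⟨d, hd, hd1, hd2⟩ :=
      (P i : ((BS n).deleteEdges Fe).Walk 1 c).exists_boundary_dart S huS hvS
    refine ⟨d.edge, List.mem_map_of_mem hd, ?_⟩
    obtain ⟨hBS, hnF⟩ := deleteEdges_adj.mp d.adj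
    have hedge : d.edge = s(d.fst, d.snd) := rfl
    rw [hSdef] at hd1
    simp only [Set.mem_insert_iff, Set.mem_singleton_iff] at hd1
    have hsndS : ∀ z : Equiv.Perm (Fin n), d.snd = z → z ∈ S → False := by
      intro z hz hzS
      exact hd2 (by rw [hz]; exact hzS)
    rcases hd1 with h1 | h1 | h1 | h1
    · -- d.fst = 1 : a genuine cut edge at u
      rw [h1] at hBS hedge
      rw [hedge, hCdef]
      refine Set.mem_union_left _ ⟨d.snd, ⟨hBS, ?_⟩, rfl⟩
      intro hmem
      rcases hmem with h' | h'
      · exact hd2 (by rw [h']; exact haS)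
      · rw [Set.mem_singleton_iff] at h'
        exact hd2 (by rw [h']; exact hbS)
    · -- d.fst = a
      rw [h1] at hBS hnF hedge
      have hUn : s(a, d.snd) ∈ Un := by
        rw [hUdef]
        exact Set.mem_union_left _ (Set.mem_union_left _
          ((SimpleGraph.mk'_mem_incidenceSet_left_iff (BS n)).mpr hBS))
      have hKm : s(a, d.snd) ∈ Kset := by
        by_contra hK
        exact hnF ⟨hUn, hK⟩
      rw [hKdef] at hKm
      simp only [Set.mem_insert_iff, Set.mem_singleton_iff] at hKm
      rcases hKm with h' | h' | h' | h' | h'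
      · rcases Sym2.eq_iff.mp h' with ⟨hx, hy⟩ | ⟨hx, hy⟩
        · exact absurd hx ha1
        · exact absurd (hsndS _ hy huS) id
      · rcases Sym2.eq_iff.mp h' with ⟨hx, hy⟩ | ⟨hx, hy⟩
        · exact absurd (hsndS _ hy habS) id
        · exact absurd hx ha_ab
      · rcases Sym2.eq_iff.mp h' with ⟨hx, hy⟩ | ⟨hx, hy⟩
        · exact absurd hx ha_ab
        · exact absurd hx hanb
      · rcases Sym2.eq_iff.mp h' with ⟨hx, hy⟩ | ⟨hx, hy⟩
        · exact absurd hx hanb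
        · exact absurd hx ha1
      · rcases Sym2.eq_iff.mp h' with ⟨hx, hy⟩ | ⟨hx, hy⟩
        · rw [hedge, hCdef]
          rw [hy]
          exact Set.mem_union_right _ rfl
        · exact absurd hx ha_ac
    · -- d.fst = a*b
      rw [h1] at hBS hnF hedge
      have hUn : s(a*b, d.snd) ∈ Un := by
        rw [hUdef]
        exact Set.mem_union_left _ (Set.mem_union_right _
          ((SimpleGraph.mk'_mem_incidenceSet_left_iff (BS n)).mpr hBS))
      have hKm : s(a*b, d.snd) ∈ Kset := by
        by_contra hK
        exact hnF ⟨hUn, hK⟩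
      rw [hKdef] at hKm
      simp only [Set.mem_insert_iff, Set.mem_singleton_iff] at hKm
      rcases hKm with h' | h' | h' | h' | h'
      · rcases Sym2.eq_iff.mp h' with ⟨hx, hy⟩ | ⟨hx, hy⟩
        · exact absurd hx hab1
        · exact absurd hx ha_ab.symm
      · rcases Sym2.eq_iff.mp h' with ⟨hx, hy⟩ | ⟨hx, hy⟩
        · exact absurd hx ha_ab.symm
        · exact absurd (hsndS _ hy haS) id
      · rcases Sym2.eq_iff.mp h' with ⟨hx, hy⟩ | ⟨hx, hy⟩
        · exact absurd (hsndS _ hy hbS) id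
        · exact absurd hx hab_b
      · rcases Sym2.eq_iff.mp h' with ⟨hx, hy⟩ | ⟨hx, hy⟩
        · exact absurd hx hab_b
        · exact absurd hx hab1
      · rcases Sym2.eq_iff.mp h' with ⟨hx, hy⟩ | ⟨hx, hy⟩
        · exact absurd hx ha_ab.symm
        · exact absurd hx hab_ac
    · -- d.fst = b
      rw [h1] at hBS hnF hedge
      have hUn : s(b, d.snd) ∈ Un := by
        rw [hUdef]
        exact Set.mem_union_right _ ((SimpleGraph.mk'_mem_incidenceSet_left_iff (BS n)).mpr hBS)
      have hKm : s(b, d.snd) ∈ Kset := by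
        by_contra hK
        exact hnF ⟨hUn, hK⟩
      rw [hKdef] at hKm
      simp only [Set.mem_insert_iff, Set.mem_singleton_iff] at hKm
      rcases hKm with h' | h' | h' | h' | h'
      · rcases Sym2.eq_iff.mp h' with ⟨hx, hy⟩ | ⟨hx, hy⟩
        · exact absurd hx hb1
        · exact absurd hx hanb.symm
      · rcases Sym2.eq_iff.mp h' with ⟨hx, hy⟩ | ⟨hx, hy⟩
        · exact absurd hx hanb.symm
        · exact absurd hx hab_b.symm
      · rcases Sym2.eq_iff.mp h' with ⟨hx, hy⟩ | ⟨hx, hy⟩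
        · exact absurd hx hab_b.symm
        · exact absurd (hsndS _ hy habS) id
      · rcases Sym2.eq_iff.mp h' with ⟨hx, hy⟩ | ⟨hx, hy⟩
        · exact absurd (hsndS _ hy huS) id
        · exact absurd hx hb1
      · rcases Sym2.eq_iff.mp h' with ⟨hx, hy⟩ | ⟨hx, hy⟩
        · exact absurd hx hanb.symm
        · exact absurd hx hb_ac
  choose f hf1 hf2 using hstep
  have hinj : Function.Injective f := by
    intro i j hij
    by_contra hne
    exact (hP i j hne) (hf1 i) (by rw [hij]; exact hf1 j)
  have hm : m ≤ C.ncard := by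
    have hrange : Set.range f ⊆ C := by
      rintro e ⟨i, rfl⟩
      exact hf2 i
    have hrc : (Set.range f).ncard = m := by
      rw [← Set.image_univ, Set.ncard_image_of_injective _ hinj, Set.ncard_univ,
        Nat.card_eq_fintype_card, Fintype.card_fin]
    rw [← hrc]
    exact Set.ncard_le_ncard hrange (Set.toFinite _)
  omega
end
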